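/- arXiv:1507.04800 — 7 statements merged into one kernel-verified Lean document; each statement's English description precedes it below -/
import Mathlib

section
/- If G is a distance preserving graph with at least 2 vertices, then for any graph H the lexicographic product G[H] is distance preserving. -/
open SimpleGraph

variable {α β : Type*}

/-- The lexicographic product `G[H]`. -/
def lexProd (G : SimpleGraph α) (H : SimpleGraph β) : SimpleGraph (α × β) where
  Adj p q := G.Adj p.1 q.1 ∨ (p.1 = q.1 ∧ H.Adj p.2 q.2)
  symm := by
    constructor
    rintro ⟨u, x⟩ ⟨v, y⟩ (h | ⟨h1, h2⟩)
    · exact Or.inl h.symm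
    · exact Or.inr ⟨h1.symm, h2.symm⟩
  loopless := by
    constructor
    rintro ⟨u, x⟩ (h | ⟨-, h⟩)
    · exact G.irrefl h
    · exact H.irrefl h

/-- The induced subgraph on `S` is an isometric subgraph of `G`. -/
def IsometricSet (G : SimpleGraph α) (S : Set α) : Prop :=
  ∀ a b : S, (G.induce S).edist a b = G.edist a.1 b.1

/-- The set of orders of isometric (induced) subgraphs of `G`. -/
def dpSet (G : SimpleGraph α) : Set ℕ :=
  {k | ∃ S : Finset α, S.card = k ∧ IsometricSet G ↑S}

/-- `G` is distance preserving. -/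
def IsDP [Fintype α] (G : SimpleGraph α) : Prop :=
  G.Connected ∧ ∀ i : ℕ, 1 ≤ i → i ≤ Fintype.card α → i ∈ dpSet G

/-- `l` is an sdp sequence for `G`. -/
def IsSdpList [Fintype α] (G : SimpleGraph α) (l : List α) : Prop :=
  l.Nodup ∧ (∀ v : α, v ∈ l) ∧
    ∀ s : ℕ, IsometricSet G {v : α | v ∉ l.take s}

/-- `G` is sequentially distance preserving. -/
def IsSDP [Fintype α] (G : SimpleGraph α) : Prop :=
  G.Connected ∧ ∃ l : List α, IsSdpList G l

private lemma adj_edist_le_one {γ : Type*} {G : SimpleGraph γ} {a b : γ} (h : G.Adj a b) :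
    G.edist a b ≤ 1 := by
  simpa using SimpleGraph.edist_le h.toWalk

private lemma two_le_enat {e : ℕ∞} (h0 : e ≠ 0) (h1 : e ≠ 1) : 2 ≤ e := by
  cases e with
  | top => exact le_top
  | coe m =>
    have hm0 : m ≠ 0 := by simpa using h0
    have hm1 : m ≠ 1 := by
      intro h; apply h1; rw [h]; rfl
    exact_mod_cast (by omega : 2 ≤ m)

/-- Projection lower bound: the first coordinates of a walk in the lex product
dominate a walk in `G`. -/
private lemma proj_le {G : SimpleGraph α} {H : SimpleGraph β} {p q : α × β}
    (w : (lexProd G H).Walk p q) : G.edist p.1 q.1 ≤ (w.length : ℕ∞) := by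
  induction w with
  | nil => simp [SimpleGraph.edist_self]
  | @cons a c b h w ih =>
    rcases h with h | ⟨h1, -⟩
    · calc G.edist a.1 b.1 ≤ G.edist a.1 c.1 + G.edist c.1 b.1 := SimpleGraph.edist_triangle
        _ ≤ 1 + (w.length : ℕ∞) := add_le_add (adj_edist_le_one h) ih
        _ = (((Walk.cons (Or.inl h) w).length : ℕ) : ℕ∞) := by
            show 1 + (w.length : ℕ∞) = ((w.length + 1 : ℕ) : ℕ∞); push_cast; ring
    · show G.edist a.1 b.1 ≤ ((w.length + 1 : ℕ) : ℕ∞); rw [h1]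
      calc G.edist c.1 b.1 ≤ (w.length : ℕ∞) := ih
        _ ≤ _ := by exact_mod_cast Nat.le_succ _

private lemma fst_edist_le {G : SimpleGraph α} {H : SimpleGraph β} (p q : α × β) :
    G.edist p.1 q.1 ≤ (lexProd G H).edist p q := by
  rcases eq_or_ne ((lexProd G H).edist p q) ⊤ with h | h
  · rw [h]; exact le_top
  obtain ⟨w, hw⟩ := SimpleGraph.exists_walk_of_edist_ne_top h
  calc G.edist p.1 q.1 ≤ (w.length : ℕ∞) := proj_le w
    _ = _ := hw

/-- The ambient distance is at most the induced distance. -/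
private lemma ambient_le_induced {G : SimpleGraph α} {S : Set α} (a b : S) :
    G.edist a.1 b.1 ≤ (G.induce S).edist a b := by
  rcases eq_or_ne ((G.induce S).edist a b) ⊤ with h | h
  · rw [h]; exact le_top
  obtain ⟨w, hw⟩ := SimpleGraph.exists_walk_of_edist_ne_top h
  calc G.edist a.1 b.1
      ≤ ((w.map (SimpleGraph.Embedding.induce S).toHom).length : ℕ∞) :=
        SimpleGraph.edist_le _
    _ = (w.length : ℕ∞) := by rw [SimpleGraph.Walk.length_map]
    _ = _ := hw

/-- There is a neighbour one step closer. -/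
private lemma edist_step {γ : Type*} {G : SimpleGraph γ} {a b : γ} {n : ℕ}
    (h : G.edist a b = (n : ℕ∞) + 1) : ∃ c, G.Adj a c ∧ G.edist c b = n := by
  have h' : G.edist a b = ((n + 1 : ℕ) : ℕ∞) := by rw [h]; push_cast; ring
  obtain ⟨w, hw⟩ := SimpleGraph.exists_walk_of_edist_eq_coe h'
  cases w with
  | nil => simp at hw
  | @cons _ c _ hadj w' =>
    rw [SimpleGraph.Walk.length_cons] at hw
    have hle : G.edist c b ≤ (n : ℕ∞) := by
      have := SimpleGraph.edist_le w'
      rwa [(by omega : w'.length = n)] at this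
    have hge : (n : ℕ∞) ≤ G.edist c b := by
      have h2 : ((n : ℕ∞)) + 1 ≤ G.edist c b + 1 := by
        rw [← h, add_comm (G.edist c b) 1]
        exact le_trans SimpleGraph.edist_triangle
          (add_le_add (adj_edist_le_one hadj) le_rfl)
      have hetop : G.edist c b ≠ ⊤ := ne_top_of_le_ne_top (ENat.coe_ne_top n) hle
      have h3 : (n : ℕ∞) < G.edist c b + 1 :=
        (ENat.add_one_le_iff (ENat.coe_ne_top n)).mp h2
      exact (ENat.lt_add_one_iff hetop).mp h3
    exact ⟨c, hadj, le_antisymm hle hge⟩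

/-- Key induction: if the first coordinates are distinct, the induced distance in the
lex product restricted to `T` is at most the `G`-distance of the first coordinates. -/
private lemma induced_edist_le_fst {G : SimpleGraph α} {H : SimpleGraph β}
    {S : Finset α} (hS : IsometricSet G ↑S) {T : Set (α × β)}
    (hfst : ∀ p ∈ T, p.1 ∈ S) (hrep : ∀ a ∈ S, ∃ z : β, (a, z) ∈ T) :
    ∀ n : ℕ, ∀ p q : α × β, ∀ (hp : p ∈ T) (hq : q ∈ T), p.1 ≠ q.1 →
      G.edist p.1 q.1 = (n : ℕ∞) →
      ((lexProd G H).induce T).edist ⟨p, hp⟩ ⟨q, hq⟩ ≤ (n : ℕ∞) := by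
  intro n
  induction n with
  | zero =>
    intro p q hp hq hne h
    exact absurd (SimpleGraph.edist_eq_zero_iff.mp (by exact_mod_cast h)) hne
  | succ n ih =>
    intro p q hp hq hne h
    have hpS : p.1 ∈ S := hfst p hp
    have hqS : q.1 ∈ S := hfst q hq
    have hS' : (G.induce (↑S : Set α)).edist ⟨p.1, hpS⟩ ⟨q.1, hqS⟩ = (n : ℕ∞) + 1 := by
      rw [hS ⟨p.1, hpS⟩ ⟨q.1, hqS⟩, h]; push_cast; ring
    obtain ⟨c, hadj, hc⟩ := edist_step hS'
    have hGadj : G.Adj p.1 c.1 := hadj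
    have hcq : G.edist c.1 q.1 = (n : ℕ∞) := by
      rw [← hS c ⟨q.1, hqS⟩]; exact hc
    obtain ⟨z, hz⟩ := hrep c.1 c.2
    by_cases hcq' : (c : α) = q.1
    · have hn0 : (n : ℕ∞) = 0 := by
        rw [← hcq, hcq', SimpleGraph.edist_self]
      have hadjT : ((lexProd G H).induce T).Adj ⟨p, hp⟩ ⟨q, hq⟩ :=
        Or.inl (hcq' ▸ hGadj)
      calc ((lexProd G H).induce T).edist ⟨p, hp⟩ ⟨q, hq⟩ ≤ 1 := adj_edist_le_one hadjT
        _ ≤ ((n + 1 : ℕ) : ℕ∞) := by push_cast; exact le_add_self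
    · have h1 : ((lexProd G H).induce T).Adj ⟨p, hp⟩ ⟨(c.1, z), hz⟩ := Or.inl hGadj
      have h2 := ih (c.1, z) q hz hq hcq' hcq
      calc ((lexProd G H).induce T).edist ⟨p, hp⟩ ⟨q, hq⟩
          ≤ ((lexProd G H).induce T).edist ⟨p, hp⟩ ⟨(c.1, z), hz⟩ +
            ((lexProd G H).induce T).edist ⟨(c.1, z), hz⟩ ⟨q, hq⟩ :=
            SimpleGraph.edist_triangle
        _ ≤ 1 + (n : ℕ∞) := add_le_add (adj_edist_le_one h1) h2
        _ = ((n + 1 : ℕ) : ℕ∞) := by push_cast; ring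

/-- Every vertex of an isometric set with at least two elements has a neighbour in the set. -/
private lemma exists_adj_mem {G : SimpleGraph α} (hGc : G.Connected)
    {S : Finset α} (hS : IsometricSet G ↑S) (h2 : 2 ≤ S.card) :
    ∀ a ∈ S, ∃ c ∈ S, G.Adj a c := by
  intro a ha
  obtain ⟨b, hb, hba⟩ := Finset.exists_mem_ne (s := S) (by omega) a
  have hreach : (G.induce (↑S : Set α)).Reachable ⟨a, ha⟩ ⟨b, hb⟩ := by
    rw [← SimpleGraph.edist_ne_top_iff_reachable, hS ⟨a, ha⟩ ⟨b, hb⟩,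
      SimpleGraph.edist_ne_top_iff_reachable]
    exact hGc.preconnected a b
  obtain ⟨w⟩ := hreach
  have hne : (⟨a, ha⟩ : (↑S : Set α)) ≠ ⟨b, hb⟩ := by
    intro h
    exact hba (congrArg Subtype.val h).symm
  obtain ⟨c, hadj, -, -⟩ := SimpleGraph.Walk.exists_eq_cons_of_ne hne w
  exact ⟨c.1, c.2, hadj⟩

/-- The main isometry lemma for suitable subsets of the lex product. -/
private lemma isoT {G : SimpleGraph α} {H : SimpleGraph β}
    (hGc : G.Connected) {S : Finset α} (hS : IsometricSet G ↑S)
    {T : Set (α × β)}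
    (hfst : ∀ p ∈ T, p.1 ∈ S) (hrep : ∀ a ∈ S, ∃ z : β, (a, z) ∈ T)
    (hnbr : ∀ a ∈ S, ∃ c ∈ S, G.Adj a c) :
    IsometricSet (lexProd G H) T := by
  rintro ⟨⟨p, x⟩, hp⟩ ⟨⟨q, y⟩, hq⟩
  refine le_antisymm ?_ (ambient_le_induced _ _)
  by_cases hpq : p = q
  · subst hpq
    by_cases hxy : x = y
    · subst hxy
      have : (⟨(p, x), hp⟩ : T) = ⟨(p, x), hq⟩ := rfl
      rw [this, SimpleGraph.edist_self]
      exact zero_le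
    · by_cases hadj : H.Adj x y
      · have h1 : ((lexProd G H).induce T).Adj ⟨(p, x), hp⟩ ⟨(p, y), hq⟩ :=
          Or.inr ⟨rfl, hadj⟩
        have hne : ((p, x) : α × β) ≠ (p, y) := by simp [hxy]
        calc ((lexProd G H).induce T).edist ⟨(p, x), hp⟩ ⟨(p, y), hq⟩ ≤ 1 :=
              adj_edist_le_one h1
          _ ≤ _ := Order.one_le_iff_pos.mpr (SimpleGraph.edist_pos_of_ne hne)
      · obtain ⟨c, hcS, hac⟩ := hnbr p (hfst _ hp)
        obtain ⟨z, hz⟩ := hrep c hcS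
        have h1 : ((lexProd G H).induce T).Adj ⟨(p, x), hp⟩ ⟨(c, z), hz⟩ := Or.inl hac
        have h2 : ((lexProd G H).induce T).Adj ⟨(c, z), hz⟩ ⟨(p, y), hq⟩ :=
          Or.inl hac.symm
        have hne : ((p, x) : α × β) ≠ (p, y) := by simp [hxy]
        have hup : 2 ≤ (lexProd G H).edist (p, x) (p, y) := by
          refine two_le_enat ?_ ?_
          · rw [Ne, SimpleGraph.edist_eq_zero_iff]
            simp [hxy]
          · rw [Ne, SimpleGraph.edist_eq_one_iff_adj]
            rintro (h | ⟨-, h⟩)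
            · exact G.irrefl h
            · exact hadj h
        calc ((lexProd G H).induce T).edist ⟨(p, x), hp⟩ ⟨(p, y), hq⟩
            ≤ ((lexProd G H).induce T).edist ⟨(p, x), hp⟩ ⟨(c, z), hz⟩ +
              ((lexProd G H).induce T).edist ⟨(c, z), hz⟩ ⟨(p, y), hq⟩ :=
              SimpleGraph.edist_triangle
          _ ≤ 1 + 1 := add_le_add (adj_edist_le_one h1) (adj_edist_le_one h2)
          _ ≤ _ := by exact_mod_cast hup
  · have hfin : G.edist p q ≠ ⊤ := by
      rw [SimpleGraph.edist_ne_top_iff_reachable]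
      exact hGc.preconnected p q
    obtain ⟨n, hn⟩ := WithTop.ne_top_iff_exists.mp hfin
    calc ((lexProd G H).induce T).edist ⟨(p, x), hp⟩ ⟨(q, y), hq⟩ ≤ (n : ℕ∞) :=
          induced_edist_le_fst hS hfst hrep n (p, x) (q, y) hp hq hpq hn.symm
      _ = G.edist p q := hn
      _ ≤ _ := fst_edist_le (p, x) (q, y)

private lemma iso_singleton {γ : Type*} (G' : SimpleGraph γ) (p : γ) :
    IsometricSet G' (↑({p} : Finset γ)) := by
  rintro ⟨a, ha⟩ ⟨b, hb⟩
  simp only [Finset.coe_singleton, Set.mem_singleton_iff] at ha hb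
  subst ha; subst hb
  rw [SimpleGraph.edist_self, SimpleGraph.edist_self]

/-- Connectivity of the lex product. -/
private lemma lexProd_connected {G : SimpleGraph α} {H : SimpleGraph β} [Nonempty β]
    (hGc : G.Connected) (hex : ∀ a : α, ∃ c, G.Adj a c) : (lexProd G H).Connected := by
  have hNα : Nonempty α := hGc.nonempty
  have key : ∀ (a : α) (x y : β), (lexProd G H).Reachable (a, x) (a, y) := by
    intro a x y
    obtain ⟨c, hc⟩ := hex a
    exact (SimpleGraph.Adj.reachable (Or.inl hc : (lexProd G H).Adj (a, x) (c, x))).trans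
      (SimpleGraph.Adj.reachable (Or.inl hc.symm : (lexProd G H).Adj (c, x) (a, y)))
  rw [connected_iff]
  refine ⟨?_, inferInstance⟩
  rintro ⟨a, x⟩ ⟨b, y⟩
  obtain ⟨w⟩ := hGc.preconnected a b
  induction w generalizing x with
  | nil => exact key _ _ _
  | @cons a c b h w ih =>
    exact (SimpleGraph.Adj.reachable
      (Or.inl h : (lexProd G H).Adj (a, x) (c, x))).trans (ih x)

/-- The building block: full fibres over all but two adjacent vertices of an
isometric set, partial fibres over those two. -/
private lemma build {G : SimpleGraph α} {H : SimpleGraph β} [Fintype β] [Nonempty β]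
    (hGc : G.Connected) {S : Finset α} (hS : IsometricSet G ↑S) (h2 : 2 ≤ S.card)
    (X Y : Finset β) (hX : X.Nonempty) (hY : Y.Nonempty) :
    (S.card - 2) * Fintype.card β + X.card + Y.card ∈ dpSet (lexProd G H) := by
  have hSne : S.Nonempty := Finset.card_pos.mp (by omega : 0 < S.card)
  obtain ⟨u, hu⟩ := hSne
  obtain ⟨v, hv, huv⟩ := exists_adj_mem hGc hS h2 u hu
  have huv' : u ≠ v := huv.ne
  classical
  set T : Finset (α × β) :=
    ((S \ {u, v}) ×ˢ (Finset.univ : Finset β)) ∪ ({u} ×ˢ X ∪ {v} ×ˢ Y) with hT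
  have memT : ∀ p : α × β,
      p ∈ T ↔ (p.1 ∈ S ∧ p.1 ≠ u ∧ p.1 ≠ v) ∨ (p.1 = u ∧ p.2 ∈ X) ∨ (p.1 = v ∧ p.2 ∈ Y) := by
    intro p
    simp only [hT, Finset.mem_union, Finset.mem_product, Finset.mem_sdiff,
      Finset.mem_insert, Finset.mem_singleton, Finset.mem_univ, and_true]
    tauto
  have hfst : ∀ p : α × β, p ∈ (↑T : Set (α × β)) → p.1 ∈ S := by
    intro p hp
    rw [Finset.mem_coe, memT] at hp
    rcases hp with ⟨h, -, -⟩ | ⟨h, -⟩ | ⟨h, -⟩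
    · exact h
    · exact h ▸ hu
    · exact h ▸ hv
  have hrep : ∀ a ∈ S, ∃ z : β, (a, z) ∈ (↑T : Set (α × β)) := by
    intro a ha
    by_cases hau : a = u
    · obtain ⟨z, hz⟩ := hX
      exact ⟨z, by rw [Finset.mem_coe, memT]; right; left; exact ⟨hau, hz⟩⟩
    by_cases hav : a = v
    · obtain ⟨z, hz⟩ := hY
      exact ⟨z, by rw [Finset.mem_coe, memT]; right; right; exact ⟨hav, hz⟩⟩
    · obtain ⟨z⟩ := (inferInstance : Nonempty β)
      exact ⟨z, by rw [Finset.mem_coe, memT]; left; exact ⟨ha, hau, hav⟩⟩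
  refine ⟨T, ?_, isoT hGc hS hfst hrep (exists_adj_mem hGc hS h2)⟩
  · have hd1 : Disjoint ({u} ×ˢ X) ({v} ×ˢ Y) := by
      rw [Finset.disjoint_left]
      rintro ⟨a, z⟩ h1 h2
      simp only [Finset.mem_product, Finset.mem_singleton] at h1 h2
      exact huv' (h1.1.symm ▸ h2.1)
    have hd2 : Disjoint ((S \ {u, v}) ×ˢ (Finset.univ : Finset β)) ({u} ×ˢ X ∪ {v} ×ˢ Y) := by
      rw [Finset.disjoint_left]
      rintro ⟨a, z⟩ h1 h2
      simp only [Finset.mem_product, Finset.mem_sdiff, Finset.mem_insert,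
        Finset.mem_singleton, Finset.mem_union] at h1 h2
      rcases h2 with ⟨h, -⟩ | ⟨h, -⟩
      · exact h1.1.2 (Or.inl h)
      · exact h1.1.2 (Or.inr h)
    have hsub : ({u, v} : Finset α) ⊆ S := by
      intro a ha
      rcases Finset.mem_insert.mp ha with rfl | ha
      · exact hu
      · exact (Finset.mem_singleton.mp ha) ▸ hv
    rw [hT, Finset.card_union_of_disjoint hd2, Finset.card_union_of_disjoint hd1,
      Finset.card_product, Finset.card_product, Finset.card_product,
      Finset.card_sdiff_of_subset hsub, Finset.card_singleton, Finset.card_singleton,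
      Finset.card_univ, Finset.card_insert_of_notMem (by simpa using huv'),
      Finset.card_singleton]
    ring

theorem stmt_4 (G : SimpleGraph α) (H : SimpleGraph β)
    [Fintype α] (hcard : 2 ≤ Fintype.card α) (hG : IsDP G)
    [Fintype β] [Nonempty β] :
    IsDP (lexProd G H) := by
  classical
  obtain ⟨hGc, hGdp⟩ := hG
  have hm1 : 1 ≤ Fintype.card β := Fintype.card_pos
  have hex : ∀ a : α, ∃ c, G.Adj a c := by
    intro a
    obtain ⟨b, hb⟩ := Fintype.exists_ne_of_one_lt_card (by omega) a
    obtain ⟨w⟩ := hGc.preconnected a b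
    obtain ⟨c, hadj, -, -⟩ := SimpleGraph.Walk.exists_eq_cons_of_ne (Ne.symm hb) w
    exact ⟨c, hadj⟩
  refine ⟨lexProd_connected hGc hex, ?_⟩
  intro i hi1 hi2
  rw [Fintype.card_prod] at hi2
  rcases eq_or_lt_of_le hi1 with h1 | h1
  · -- i = 1 : a singleton
    obtain ⟨a⟩ := hGc.nonempty
    obtain ⟨x⟩ := (inferInstance : Nonempty β)
    exact ⟨{(a, x)}, by rw [← h1, Finset.card_singleton], iso_singleton _ _⟩
  · -- i ≥ 2
    have hm0 : 0 < Fintype.card β := hm1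
    have heq := Nat.div_add_mod (i - 1) (Fintype.card β)
    have hem : (i - 1) % Fintype.card β < Fintype.card β := Nat.mod_lt _ hm0
    by_cases hq0 : (i - 1) / Fintype.card β = 0
    · -- i ≤ m : two partial fibres over an isometric pair
      rw [hq0, Nat.mul_zero, Nat.zero_add] at heq
      obtain ⟨S, hScard, hS⟩ := hGdp 2 (by omega) hcard
      obtain ⟨X, -, hXcard⟩ := Finset.exists_subset_card_eq
        (show i - 1 ≤ (Finset.univ : Finset β).card by rw [Finset.card_univ]; omega)
      obtain ⟨x⟩ := (inferInstance : Nonempty β)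
      have hb := build (H := H) hGc hS (by omega) X {x}
        (Finset.card_pos.mp (by rw [hXcard]; omega)) (Finset.singleton_nonempty x)
      rw [hScard, hXcard, Finset.card_singleton] at hb
      have hieq : (2 - 2) * Fintype.card β + (i - 1) + 1 = i := by omega
      rwa [hieq] at hb
    · -- i > m
      have hq1 : 1 ≤ (i - 1) / Fintype.card β := Nat.pos_of_ne_zero hq0
      have h3 : Fintype.card β * ((i - 1) / Fintype.card β) <
          Fintype.card β * Fintype.card α := by
        calc Fintype.card β * ((i - 1) / Fintype.card β)
            ≤ Fintype.card β * ((i - 1) / Fintype.card β) + (i - 1) % Fintype.card β :=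
              Nat.le_add_right _ _
          _ = i - 1 := heq
          _ < i := by omega
          _ ≤ Fintype.card α * Fintype.card β := hi2
          _ = Fintype.card β * Fintype.card α := Nat.mul_comm _ _
      have hqlt : (i - 1) / Fintype.card β < Fintype.card α := Nat.lt_of_mul_lt_mul_left h3
      have hqcard : (i - 1) / Fintype.card β + 1 ≤ Fintype.card α := hqlt
      obtain ⟨S, hScard, hS⟩ := hGdp ((i - 1) / Fintype.card β + 1) (by omega) hqcard
      obtain ⟨Y, -, hYcard⟩ := Finset.exists_subset_card_eq
        (show (i - 1) % Fintype.card β + 1 ≤ (Finset.univ : Finset β).card by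
          rw [Finset.card_univ]; omega)
      have hb := build (H := H) hGc hS (by rw [hScard]; omega)
        (Finset.univ : Finset β) Y Finset.univ_nonempty
        (Finset.card_pos.mp (by rw [hYcard]; omega))
      rw [hScard, hYcard, Finset.card_univ] at hb
      have hieq : ((i - 1) / Fintype.card β + 1 - 2) * Fintype.card β + Fintype.card β +
          ((i - 1) % Fintype.card β + 1) = i := by
        have hkey : Fintype.card β * ((i - 1) / Fintype.card β) + (i - 1) % Fintype.card β + 1
            = i := by rw [heq]; omega
        calc ((i - 1) / Fintype.card β + 1 - 2) * Fintype.card β + Fintype.card β +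
            ((i - 1) % Fintype.card β + 1)
            = ((i - 1) / Fintype.card β - 1) * Fintype.card β + Fintype.card β +
              ((i - 1) % Fintype.card β + 1) := by
              rw [show (i - 1) / Fintype.card β + 1 - 2 = (i - 1) / Fintype.card β - 1
                from by omega]
          _ = ((i - 1) / Fintype.card β - 1 + 1) * Fintype.card β +
              ((i - 1) % Fintype.card β + 1) := by rw [Nat.succ_mul]
          _ = ((i - 1) / Fintype.card β) * Fintype.card β +
              ((i - 1) % Fintype.card β + 1) := by
              rw [show (i - 1) / Fintype.card β - 1 + 1 = (i - 1) / Fintype.card β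
                from by omega]
          _ = Fintype.card β * ((i - 1) / Fintype.card β) +
              (i - 1) % Fintype.card β + 1 := by
              rw [Nat.mul_comm, ← Nat.add_assoc]
          _ = i := hkey
      rwa [hieq] at hb
end

section
/- Let G be a connected graph with at least 2 vertices and K an induced subgraph of G[H]. Then K is isometric in G[H] if and only if: π(K) is isometric in G when |π(K)| ≥ 2, and K has diameter at most 2 when |π(K)| = 1. -/
open SimpleGraph

variable {α β : Type*}

section Helpers
variable {G : SimpleGraph α} {H : SimpleGraph β}

lemma edist_induce_le {V : Type*} {X : SimpleGraph V} {S : Set V} (a b : ↑S) :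
    X.edist a.1 b.1 ≤ (X.induce S).edist a b := by
  rcases eq_or_ne ((X.induce S).edist a b) ⊤ with h | h
  · simp [h]
  obtain ⟨w, hw⟩ := exists_walk_of_edist_ne_top h
  have := SimpleGraph.edist_le (w.map (⟨Subtype.val, fun h => h⟩ : X.induce S →g X))
  rw [Walk.length_map] at this
  rw [← hw]; exact this

lemma proj_walk {p q : α × β} (w : (lexProd G H).Walk p q) :
    ∃ w' : G.Walk p.1 q.1, w'.length ≤ w.length := by
  induction w with
  | nil => exact ⟨.nil, le_rfl⟩
  | @cons p c q h w ih =>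
    obtain ⟨w', hw'⟩ := ih
    rcases h with h | ⟨h, -⟩
    · exact ⟨.cons h w', by show _ ≤ w.length + 1; simp only [Walk.length_cons]; omega⟩
    · exact ⟨w'.copy h.symm rfl, by show _ ≤ w.length + 1; simp only [Walk.length_copy]; omega⟩

lemma edist_fst_le (p q : α × β) :
    G.edist p.1 q.1 ≤ (lexProd G H).edist p q := by
  rcases eq_or_ne ((lexProd G H).edist p q) ⊤ with h | h
  · simp [h]
  obtain ⟨w, hw⟩ := exists_walk_of_edist_ne_top h
  obtain ⟨w', hw'⟩ := proj_walk w
  calc G.edist p.1 q.1 ≤ w'.length := SimpleGraph.edist_le w'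
    _ ≤ (w.length : ℕ∞) := by exact_mod_cast hw'
    _ = _ := hw

lemma proj_walk_ind {S : Set (α × β)} {a b : ↑S}
    (w : ((lexProd G H).induce S).Walk a b) :
    ∃ w' : (G.induce (Prod.fst '' S)).Walk ⟨a.1.1, ⟨a.1, a.2, rfl⟩⟩ ⟨b.1.1, ⟨b.1, b.2, rfl⟩⟩,
      w'.length ≤ w.length := by
  induction w with
  | nil => exact ⟨.nil, le_rfl⟩
  | @cons a c q h w ih =>
    obtain ⟨w', hw'⟩ := ih
    have h' : (lexProd G H).Adj a.1 c.1 := h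
    rcases h' with h' | ⟨h', -⟩
    · exact ⟨.cons (show (G.induce (Prod.fst '' S)).Adj ⟨a.1.1, ⟨a.1, a.2, rfl⟩⟩
        ⟨c.1.1, ⟨c.1, c.2, rfl⟩⟩ from h') w', by simp [Walk.length_cons]; omega⟩
    · exact ⟨w'.copy (Subtype.ext h'.symm) rfl, by simp [Walk.length_cons]; omega⟩

lemma lift_walk {u v : α} (x y : β) (w : G.Walk u v) (hne : u ≠ v) :
    (lexProd G H).edist (u, x) (v, y) ≤ w.length := by
  induction w with
  | nil => exact absurd rfl hne
  | @cons u c v h w ih =>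
    rcases eq_or_ne c v with rfl | hcv
    · have hadj : (lexProd G H).Adj (u, x) (c, y) := Or.inl h
      calc (lexProd G H).edist (u, x) (c, y) ≤ (hadj.toWalk).length := SimpleGraph.edist_le _
        _ ≤ _ := by simp
    · have hadj : (lexProd G H).Adj (u, x) (c, x) := Or.inl h
      calc (lexProd G H).edist (u, x) (v, y)
          ≤ (lexProd G H).edist (u, x) (c, x) + (lexProd G H).edist (c, x) (v, y) :=
            SimpleGraph.edist_triangle
        _ ≤ (hadj.toWalk).length + w.length := add_le_add (SimpleGraph.edist_le _) (ih hcv)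
        _ ≤ _ := by simp [Walk.length_cons, add_comm]

lemma edist_lift {p q : α × β} (hne : p.1 ≠ q.1) :
    (lexProd G H).edist p q ≤ G.edist p.1 q.1 := by
  rcases eq_or_ne (G.edist p.1 q.1) ⊤ with h | h
  · simp [h]
  obtain ⟨w, hw⟩ := exists_walk_of_edist_ne_top h
  have := lift_walk (H := H) p.2 q.2 w hne
  simpa [hw] using this

lemma lift_walk_ind {S : Set (α × β)} {c d : ↑(Prod.fst '' S)}
    (w : (G.induce (Prod.fst '' S)).Walk c d) :
    ∀ a b : ↑S, a.1.1 = c.1 → b.1.1 = d.1 → a.1.1 ≠ b.1.1 →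
      ((lexProd G H).induce S).edist a b ≤ w.length := by
  induction w with
  | nil =>
    intro a b ha hb hne
    exact absurd (ha.trans hb.symm) hne
  | @cons c e d h w ih =>
    intro a b ha hb hne
    have h' : G.Adj c.1 e.1 := h
    rcases eq_or_ne e.1 d.1 with heq | hed
    · have hadj : ((lexProd G H).induce S).Adj a b :=
        Or.inl (by have : G.Adj a.1.1 b.1.1 := by rw [ha, hb, ← heq]; exact h'
                   exact this)
      calc ((lexProd G H).induce S).edist a b ≤ (hadj.toWalk).length := SimpleGraph.edist_le _
        _ ≤ _ := by simp [Walk.length_cons]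
    · obtain ⟨p, hpS, hp1⟩ := e.2
      set m : ↑S := ⟨p, hpS⟩ with hm
      have hm1 : m.1.1 = e.1 := hp1
      have hadj : ((lexProd G H).induce S).Adj a m :=
        Or.inl (by have : G.Adj a.1.1 m.1.1 := by rw [ha, hm1]; exact h'
                   exact this)
      calc ((lexProd G H).induce S).edist a b
          ≤ ((lexProd G H).induce S).edist a m + ((lexProd G H).induce S).edist m b :=
            SimpleGraph.edist_triangle
        _ ≤ (hadj.toWalk).length + w.length :=
            add_le_add (SimpleGraph.edist_le _) (ih m b hm1 hb (by rw [hm1, hb]; exact hed))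
        _ ≤ _ := by simp [Walk.length_cons, add_comm]

lemma edist_lift_ind {S : Set (α × β)} (a b : ↑S) (hne : a.1.1 ≠ b.1.1) :
    ((lexProd G H).induce S).edist a b ≤
      (G.induce (Prod.fst '' S)).edist ⟨a.1.1, ⟨a.1, a.2, rfl⟩⟩ ⟨b.1.1, ⟨b.1, b.2, rfl⟩⟩ := by
  rcases eq_or_ne ((G.induce (Prod.fst '' S)).edist ⟨a.1.1, ⟨a.1, a.2, rfl⟩⟩
      ⟨b.1.1, ⟨b.1, b.2, rfl⟩⟩) ⊤ with h | h
  · simp [h]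
  obtain ⟨w, hw⟩ := exists_walk_of_edist_ne_top h
  have := lift_walk_ind (H := H) w a b rfl rfl hne
  rw [hw] at this; exact this

lemma exists_adj_of_connected (hG : G.Connected) [Fintype α] (hcard : 2 ≤ Fintype.card α)
    (u : α) : ∃ w, G.Adj u w := by
  obtain ⟨v, hv⟩ := Fintype.exists_ne_of_one_lt_card (by omega) u
  obtain ⟨p⟩ := hG.preconnected u v
  cases p with
  | nil => exact absurd rfl hv
  | cons h _ => exact ⟨_, h⟩

lemma edist_same_fst (hG : G.Connected) [Fintype α] (hcard : 2 ≤ Fintype.card α)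
    (u : α) (x y : β) : (lexProd G H).edist (u, x) (u, y) ≤ 2 := by
  obtain ⟨w, hw⟩ := exists_adj_of_connected hG hcard u
  refine le_trans (SimpleGraph.edist_le
    (Walk.cons (show (lexProd G H).Adj (u, x) (w, x) from Or.inl hw)
      (Walk.cons (show (lexProd G H).Adj (w, x) (u, y) from Or.inl hw.symm) Walk.nil))) ?_
  simp

lemma edist_proj_ind {S : Set (α × β)} (a b : ↑S) :
    (G.induce (Prod.fst '' S)).edist ⟨a.1.1, ⟨a.1, a.2, rfl⟩⟩ ⟨b.1.1, ⟨b.1, b.2, rfl⟩⟩ ≤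
      ((lexProd G H).induce S).edist a b := by
  rcases eq_or_ne (((lexProd G H).induce S).edist a b) ⊤ with h | h
  · simp [h]
  obtain ⟨w, hw⟩ := exists_walk_of_edist_ne_top h
  obtain ⟨w', hw'⟩ := proj_walk_ind w
  calc _ ≤ (w'.length : ℕ∞) := SimpleGraph.edist_le w'
    _ ≤ (w.length : ℕ∞) := by exact_mod_cast hw'
    _ = _ := hw

end Helpers

theorem stmt_5 (G : SimpleGraph α) (H : SimpleGraph β)
    (hG : G.Connected) [Fintype α] (hcard : 2 ≤ Fintype.card α)
    (S : Set (α × β)) :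
    IsometricSet (lexProd G H) S ↔
      (((Prod.fst '' S).Nontrivial → IsometricSet G (Prod.fst '' S)) ∧
       ((∃ u : α, Prod.fst '' S = {u}) →
          ∀ a b : S, ((lexProd G H).induce S).edist a b ≤ 2)) := by
  constructor
  · intro hiso
    refine ⟨fun _ => ?_, ?_⟩
    · intro cu cv
      obtain ⟨pa, hpaS, hpa⟩ := cu.2
      obtain ⟨pb, hpbS, hpb⟩ := cv.2
      set A : ↑S := ⟨pa, hpaS⟩ with hA
      set B : ↑S := ⟨pb, hpbS⟩ with hB
      rcases eq_or_ne cu cv with rfl | hne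
      · simp [SimpleGraph.edist_self]
      · have hvne : cu.1 ≠ cv.1 := fun h => hne (Subtype.ext h)
        refine le_antisymm ?_ (edist_induce_le cu cv)
        have hpa' : A.1.1 = cu.1 := hpa
        have hpb' : B.1.1 = cv.1 := hpb
        have hAB : A.1.1 ≠ B.1.1 := by rw [hpa', hpb']; exact hvne
        have e1 : (⟨A.1.1, ⟨A.1, A.2, rfl⟩⟩ : ↑(Prod.fst '' S)) = cu := Subtype.ext hpa'
        have e2 : (⟨B.1.1, ⟨B.1, B.2, rfl⟩⟩ : ↑(Prod.fst '' S)) = cv := Subtype.ext hpb'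
        calc (G.induce (Prod.fst '' S)).edist cu cv
            = (G.induce (Prod.fst '' S)).edist ⟨A.1.1, ⟨A.1, A.2, rfl⟩⟩
                ⟨B.1.1, ⟨B.1, B.2, rfl⟩⟩ := by rw [e1, e2]
          _ ≤ ((lexProd G H).induce S).edist A B := edist_proj_ind A B
          _ = (lexProd G H).edist A.1 B.1 := hiso A B
          _ ≤ G.edist A.1.1 B.1.1 := edist_lift hAB
          _ = G.edist cu.1 cv.1 := by rw [hpa', hpb']
    · rintro ⟨u, hu⟩ a b
      have ha : a.1.1 = u := by
        have : a.1.1 ∈ Prod.fst '' S := ⟨a.1, a.2, rfl⟩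
        rwa [hu] at this
      have hb : b.1.1 = u := by
        have : b.1.1 ∈ Prod.fst '' S := ⟨b.1, b.2, rfl⟩
        rwa [hu] at this
      rw [hiso a b]
      have ea : a.1 = (u, a.1.2) := by rw [← ha]
      have eb : b.1 = (u, b.1.2) := by rw [← hb]
      rw [ea, eb]
      exact edist_same_fst hG hcard u a.1.2 b.1.2
  · rintro ⟨h1, h2⟩ a b
    refine le_antisymm ?_ (edist_induce_le a b)
    rcases eq_or_ne a.1.1 b.1.1 with heq | hne
    · rcases eq_or_ne a b with rfl | hab
      · simp [SimpleGraph.edist_self]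
      · by_cases hadj : (lexProd G H).Adj a.1 b.1
        · rw [edist_eq_one_iff_adj.mpr hadj]
          have hadj' : ((lexProd G H).induce S).Adj a b := hadj
          exact le_trans (SimpleGraph.edist_le hadj'.toWalk) (by simp)
        · have hab' : a.1 ≠ b.1 := fun h => hab (Subtype.ext h)
          have hne0 : (lexProd G H).edist a.1 b.1 ≠ 0 :=
            fun h => hab' (SimpleGraph.edist_eq_zero_iff.mp h)
          have hne1 : (lexProd G H).edist a.1 b.1 ≠ 1 :=
            fun h => hadj (SimpleGraph.edist_eq_one_iff_adj.mp h)
          have h2le : 2 ≤ (lexProd G H).edist a.1 b.1 := by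
            have h0 : 1 ≤ (lexProd G H).edist a.1 b.1 :=
              Order.one_le_iff_pos.mpr (pos_iff_ne_zero.mpr hne0)
            have hlt : 1 < (lexProd G H).edist a.1 b.1 := lt_of_le_of_ne h0 (Ne.symm hne1)
            have := Order.add_one_le_of_lt hlt
            rwa [one_add_one_eq_two] at this
          refine le_trans ?_ h2le
          by_cases hT : (Prod.fst '' S).Nontrivial
          · have hIso := h1 hT
            set ca : ↑(Prod.fst '' S) := ⟨a.1.1, ⟨a.1, a.2, rfl⟩⟩ with hca
            have hW : ∃ cw : ↑(Prod.fst '' S), cw.1 ≠ a.1.1 := by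
              obtain ⟨u1, hu1, u2, hu2, hu12⟩ := hT
              rcases eq_or_ne u1 a.1.1 with rfl | h
              · exact ⟨⟨u2, hu2⟩, fun hh => hu12 hh.symm⟩
              · exact ⟨⟨u1, hu1⟩, h⟩
            obtain ⟨cw, hcw⟩ := hW
            have hfin : (G.induce (Prod.fst '' S)).edist ca cw ≠ ⊤ := by
              rw [hIso ca cw]
              exact SimpleGraph.edist_ne_top_iff_reachable.mpr (hG.preconnected _ _)
            obtain ⟨wk, hwk⟩ := exists_walk_of_edist_ne_top hfin
            cases wk with
            | nil => exact absurd rfl hcw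
            | @cons _ e _ hadj2 _ =>
              obtain ⟨p, hpS, hp1⟩ := e.2
              have hadj2' : G.Adj a.1.1 e.1 := hadj2
              have adj1 : ((lexProd G H).induce S).Adj a ⟨p, hpS⟩ :=
                Or.inl (by have : G.Adj a.1.1 p.1 := by rw [hp1]; exact hadj2'
                           exact this)
              have adj2 : ((lexProd G H).induce S).Adj ⟨p, hpS⟩ b :=
                Or.inl (by have : G.Adj p.1 b.1.1 := by rw [hp1, ← heq]; exact hadj2'.symm
                           exact this)
              exact le_trans (SimpleGraph.edist_le (Walk.cons adj1 (Walk.cons adj2 Walk.nil)))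
                (by simp)
          · have hsub : (Prod.fst '' S).Subsingleton := Set.not_nontrivial_iff.mp hT
            exact h2 ⟨a.1.1, hsub.eq_singleton_of_mem ⟨a.1, a.2, rfl⟩⟩ a b
    · have hT : (Prod.fst '' S).Nontrivial :=
        ⟨a.1.1, ⟨a.1, a.2, rfl⟩, b.1.1, ⟨b.1, b.2, rfl⟩, hne⟩
      have hIso := h1 hT
      calc ((lexProd G H).induce S).edist a b
          ≤ (G.induce (Prod.fst '' S)).edist ⟨a.1.1, ⟨a.1, a.2, rfl⟩⟩
              ⟨b.1.1, ⟨b.1, b.2, rfl⟩⟩ := edist_lift_ind a b hne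
        _ = G.edist a.1.1 b.1.1 := hIso _ _
        _ ≤ (lexProd G H).edist a.1 b.1 := edist_fst_le a.1 b.1
end

section
/- Let A ⊆ V(G) and B ⊆ V(H) be nonempty. Then removing the vertex set A × B from G □ H yields an isometric subgraph of G □ H if and only if G − A is an isometric subgraph of G and H − B is an isometric subgraph of H. -/
open SimpleGraph

variable {α β : Type*}

section Aux

variable {G : SimpleGraph α} {H : SimpleGraph β}

lemma hom_edist_le (f : G →g H) (a b : α) : H.edist (f a) (f b) ≤ G.edist a b := by
  rcases eq_or_ne (G.edist a b) ⊤ with h | h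
  · exact h ▸ le_top
  · obtain ⟨w, hw⟩ := exists_walk_of_edist_ne_top h
    calc H.edist (f a) (f b) ≤ (w.map f).length := edist_le _
      _ = w.length := by rw [Walk.length_map]
      _ = G.edist a b := hw

lemma boxProd_edist_ge {p q : α × β} (w : (G □ H).Walk p q) :
    G.edist p.1 q.1 + H.edist p.2 q.2 ≤ w.length := by
  induction w with
  | nil => simp [SimpleGraph.edist_self]
  | @cons p r q h w ih =>
    rcases h with ⟨hG, h2⟩ | ⟨hH, h1⟩
    · have t1 : G.edist p.1 q.1 ≤ 1 + G.edist r.1 q.1 :=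
        le_trans (G.edist_triangle) (by rw [edist_eq_one_iff_adj.2 hG])
      calc G.edist p.1 q.1 + H.edist p.2 q.2
          ≤ (1 + G.edist r.1 q.1) + H.edist r.2 q.2 := by rw [h2]; gcongr
        _ ≤ 1 + w.length := by rw [add_assoc]; gcongr
        _ = _ := by show 1 + (w.length : ℕ∞) = ((w.length + 1 : ℕ) : ℕ∞); push_cast; ring
    · have t1 : H.edist p.2 q.2 ≤ 1 + H.edist r.2 q.2 :=
        le_trans (H.edist_triangle) (by rw [edist_eq_one_iff_adj.2 hH])
      calc G.edist p.1 q.1 + H.edist p.2 q.2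
          ≤ G.edist r.1 q.1 + (1 + H.edist r.2 q.2) := by rw [h1]; gcongr
        _ ≤ 1 + w.length := by
            rw [add_comm (G.edist _ _), add_assoc]; gcongr; rw [add_comm]; gcongr
        _ = _ := by show 1 + (w.length : ℕ∞) = ((w.length + 1 : ℕ) : ℕ∞); push_cast; ring

lemma boxProd_edist (p q : α × β) :
    (G □ H).edist p q = G.edist p.1 q.1 + H.edist p.2 q.2 := by
  refine le_antisymm ?_ ?_
  · rcases eq_or_ne (G.edist p.1 q.1) ⊤ with h1 | h1
    · simp [h1]
    rcases eq_or_ne (H.edist p.2 q.2) ⊤ with h2 | h2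
    · simp [h2]
    obtain ⟨w1, hw1⟩ := exists_walk_of_edist_ne_top h1
    obtain ⟨w2, hw2⟩ := exists_walk_of_edist_ne_top h2
    calc (G □ H).edist p q ≤ ((w1.boxProdLeft H p.2).append (w2.boxProdRight G q.1)).length :=
          edist_le _
      _ = G.edist p.1 q.1 + H.edist p.2 q.2 := by
          rw [Walk.length_append, Walk.boxProdLeft, Walk.boxProdRight, ← hw1, ← hw2]
          push_cast
          congr 1 <;> exact congrArg _ (Walk.length_map _ _)
  · rcases eq_or_ne ((G □ H).edist p q) ⊤ with h | h
    · exact h ▸ le_top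
    obtain ⟨w, hw⟩ := exists_walk_of_edist_ne_top h
    exact hw ▸ boxProd_edist_ge w

lemma forward_claim {A : Set α} {B : Set β}
    {p q : ↑((A ×ˢ B)ᶜ)} (w : ((G □ H).induce (A ×ˢ B)ᶜ).Walk p q)
    (hpB : (p : α × β).2 ∈ B) (hlen : (w.length : ℕ∞) ≤ G.edist (p : α × β).1 (q : α × β).1) :
    ∃ (hp : (p : α × β).1 ∈ Aᶜ) (hq : (q : α × β).1 ∈ Aᶜ),
      (G.induce Aᶜ).edist ⟨_, hp⟩ ⟨_, hq⟩ ≤ w.length := by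
  induction w with
  | @nil p =>
    have hp : (p : α × β).1 ∈ Aᶜ := fun hA => p.2 (Set.mk_mem_prod hA hpB)
    exact ⟨hp, hp, by simp [SimpleGraph.edist_self]⟩
  | @cons p r q h w' ih =>
    have hp : (p : α × β).1 ∈ Aᶜ := fun hA => p.2 (Set.mk_mem_prod hA hpB)
    have hadj : (G □ H).Adj ↑p ↑r := h
    rcases hadj with ⟨hG, heq2⟩ | ⟨hHadj, heq1⟩
    · -- G-step
      have hrB : (r : α × β).2 ∈ B := heq2 ▸ hpB
      have tri : G.edist (p : α × β).1 (q : α × β).1 ≤ 1 + G.edist (r : α × β).1 (q : α × β).1 :=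
        le_trans G.edist_triangle (by rw [edist_eq_one_iff_adj.2 hG])
      have hlen' : (w'.length : ℕ∞) ≤ G.edist (r : α × β).1 (q : α × β).1 := by
        have h3 : (1 : ℕ∞) + w'.length ≤ 1 + G.edist (r : α × β).1 (q : α × β).1 := by
          refine le_trans ?_ (le_trans hlen tri)
          rw [Walk.length_cons]; push_cast; rw [add_comm]
        exact (ENat.add_le_add_iff_left (by simp)).1 h3
      obtain ⟨hr, hq, hle⟩ := ih hrB hlen'
      refine ⟨hp, hq, ?_⟩
      have tri2 : (G.induce Aᶜ).edist ⟨_, hp⟩ ⟨_, hq⟩ ≤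
          1 + (G.induce Aᶜ).edist ⟨(r : α × β).1, hr⟩ ⟨_, hq⟩ :=
        le_trans (SimpleGraph.edist_triangle) (by
          rw [edist_eq_one_iff_adj.2 (by exact hG : (G.induce Aᶜ).Adj ⟨_, hp⟩ ⟨_, hr⟩)])
      calc (G.induce Aᶜ).edist ⟨_, hp⟩ ⟨_, hq⟩ ≤ _ := tri2
        _ ≤ 1 + (w'.length : ℕ∞) := by gcongr
        _ = _ := by rw [Walk.length_cons]; push_cast; ring
    · -- H-step : contradiction
      exfalso
      have low : G.edist (r : α × β).1 (q : α × β).1 ≤ (w'.length : ℕ∞) := by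
        calc G.edist (r : α × β).1 (q : α × β).1
            ≤ G.edist (r : α × β).1 (q : α × β).1 + H.edist (r : α × β).2 (q : α × β).2 :=
              le_self_add
          _ = (G □ H).edist ↑r ↑q := (boxProd_edist _ _).symm
          _ ≤ ((w'.map (Embedding.induce _).toHom).length : ℕ∞) := edist_le _
          _ = (w'.length : ℕ∞) := by rw [Walk.length_map]
      have hcon : (w'.length + 1 : ℕ∞) ≤ (w'.length : ℕ∞) := by
        refine le_trans ?_ (le_trans hlen (heq1 ▸ low))
        rw [Walk.length_cons]; push_cast; ring_nf; rfl
      have h2 : w'.length + 1 ≤ w'.length := by exact_mod_cast hcon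
      omega

lemma forward_claim' {A : Set α} {B : Set β}
    {p q : ↑((A ×ˢ B)ᶜ)} (w : ((G □ H).induce (A ×ˢ B)ᶜ).Walk p q)
    (hpA : (p : α × β).1 ∈ A) (hlen : (w.length : ℕ∞) ≤ H.edist (p : α × β).2 (q : α × β).2) :
    ∃ (hp : (p : α × β).2 ∈ Bᶜ) (hq : (q : α × β).2 ∈ Bᶜ),
      (H.induce Bᶜ).edist ⟨_, hp⟩ ⟨_, hq⟩ ≤ w.length := by
  induction w with
  | @nil p =>
    have hp : (p : α × β).2 ∈ Bᶜ := fun hBm => p.2 (Set.mk_mem_prod hpA hBm)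
    exact ⟨hp, hp, by simp [SimpleGraph.edist_self]⟩
  | @cons p r q h w' ih =>
    have hp : (p : α × β).2 ∈ Bᶜ := fun hBm => p.2 (Set.mk_mem_prod hpA hBm)
    have hadj : (G □ H).Adj ↑p ↑r := h
    rcases hadj with ⟨hG, heq2⟩ | ⟨hHadj, heq1⟩
    · -- G-step : contradiction
      exfalso
      have low : H.edist (r : α × β).2 (q : α × β).2 ≤ (w'.length : ℕ∞) := by
        calc H.edist (r : α × β).2 (q : α × β).2
            ≤ G.edist (r : α × β).1 (q : α × β).1 + H.edist (r : α × β).2 (q : α × β).2 :=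
              le_add_self
          _ = (G □ H).edist ↑r ↑q := (boxProd_edist _ _).symm
          _ ≤ ((w'.map (Embedding.induce _).toHom).length : ℕ∞) := edist_le _
          _ = (w'.length : ℕ∞) := by rw [Walk.length_map]
      have hcon : (w'.length + 1 : ℕ∞) ≤ (w'.length : ℕ∞) := by
        refine le_trans ?_ (le_trans hlen (heq2 ▸ low))
        rw [Walk.length_cons]; push_cast; ring_nf; rfl
      have h2 : w'.length + 1 ≤ w'.length := by exact_mod_cast hcon
      omega
    · -- H-step
      have hrA : (r : α × β).1 ∈ A := heq1 ▸ hpA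
      have tri : H.edist (p : α × β).2 (q : α × β).2 ≤ 1 + H.edist (r : α × β).2 (q : α × β).2 :=
        le_trans H.edist_triangle (by rw [edist_eq_one_iff_adj.2 hHadj])
      have hlen' : (w'.length : ℕ∞) ≤ H.edist (r : α × β).2 (q : α × β).2 := by
        have h3 : (1 : ℕ∞) + w'.length ≤ 1 + H.edist (r : α × β).2 (q : α × β).2 := by
          refine le_trans ?_ (le_trans hlen tri)
          rw [Walk.length_cons]; push_cast; rw [add_comm]
        exact (ENat.add_le_add_iff_left (by simp)).1 h3
      obtain ⟨hr, hq, hle⟩ := ih hrA hlen'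
      refine ⟨hp, hq, ?_⟩
      have tri2 : (H.induce Bᶜ).edist ⟨_, hp⟩ ⟨_, hq⟩ ≤
          1 + (H.induce Bᶜ).edist ⟨(r : α × β).2, hr⟩ ⟨_, hq⟩ :=
        le_trans (SimpleGraph.edist_triangle) (by
          rw [edist_eq_one_iff_adj.2 (by exact hHadj : (H.induce Bᶜ).Adj ⟨_, hp⟩ ⟨_, hr⟩)])
      calc (H.induce Bᶜ).edist ⟨_, hp⟩ ⟨_, hq⟩ ≤ _ := tri2
        _ ≤ 1 + (w'.length : ℕ∞) := by gcongr
        _ = _ := by rw [Walk.length_cons]; push_cast; ring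

/-- A row at height `y ∉ B` embeds into the induced product. -/
def rowHom (A : Set α) {B : Set β} {y : β} (hy : y ∉ B) :
    G →g (G □ H).induce ((A ×ˢ B)ᶜ) where
  toFun u := ⟨(u, y), fun hm => hy hm.2⟩
  map_rel' h := Or.inl ⟨h, rfl⟩

/-- A column at `u ∉ A` embeds into the induced product. -/
def colHom {A : Set α} (B : Set β) {u : α} (hu : u ∉ A) :
    H →g (G □ H).induce ((A ×ˢ B)ᶜ) where
  toFun x := ⟨(u, x), fun hm => hu hm.1⟩
  map_rel' h := Or.inr ⟨h, rfl⟩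

/-- A row of `G − A` at any height embeds into the induced product. -/
def rowHom' {A : Set α} (B : Set β) (y : β) :
    G.induce Aᶜ →g (G □ H).induce ((A ×ˢ B)ᶜ) where
  toFun u := ⟨(u.1, y), fun hm => u.2 hm.1⟩
  map_rel' h := Or.inl ⟨h, rfl⟩

/-- A column of `H − B` at any `u` embeds into the induced product. -/
def colHom' (A : Set α) {B : Set β} (u : α) :
    H.induce Bᶜ →g (G □ H).induce ((A ×ˢ B)ᶜ) where
  toFun x := ⟨(u, x.1), fun hm => x.2 hm.2⟩
  map_rel' h := Or.inr ⟨h, rfl⟩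

end Aux

theorem stmt_9 (G : SimpleGraph α) (H : SimpleGraph β)
    (A : Set α) (B : Set β) (hA : A.Nonempty) (hB : B.Nonempty) :
    IsometricSet (G □ H) ((A ×ˢ B)ᶜ) ↔
      IsometricSet G Aᶜ ∧ IsometricSet H Bᶜ := by
  constructor
  · intro hC
    constructor
    · intro a b
      refine le_antisymm ?_ (hom_edist_le (Embedding.induce Aᶜ).toHom a b)
      obtain ⟨y, hy⟩ := hB
      set p : ↑((A ×ˢ B)ᶜ) := ⟨(a.1, y), fun hm => a.2 hm.1⟩ with hp_def
      set q : ↑((A ×ˢ B)ᶜ) := ⟨(b.1, y), fun hm => b.2 hm.1⟩ with hq_def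
      have hCd : ((G □ H).induce ((A ×ˢ B)ᶜ)).edist p q = G.edist a.1 b.1 := by
        rw [hC p q, boxProd_edist]
        simp [hp_def, hq_def, SimpleGraph.edist_self]
      rcases eq_or_ne (G.edist a.1 b.1) ⊤ with htop | htop
      · exact htop ▸ le_top
      · obtain ⟨w, hw⟩ := exists_walk_of_edist_ne_top (hCd ▸ htop)
        obtain ⟨hp, hq, hle⟩ := forward_claim (A := A) w hy
          (by rw [hw, hCd])
        calc (G.induce Aᶜ).edist a b = (G.induce Aᶜ).edist ⟨a.1, hp⟩ ⟨b.1, hq⟩ := rfl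
          _ ≤ w.length := hle
          _ = G.edist a.1 b.1 := by rw [hw, hCd]
    · intro a b
      refine le_antisymm ?_ (hom_edist_le (Embedding.induce Bᶜ).toHom a b)
      obtain ⟨u, hu⟩ := hA
      set p : ↑((A ×ˢ B)ᶜ) := ⟨(u, a.1), fun hm => a.2 hm.2⟩ with hp_def
      set q : ↑((A ×ˢ B)ᶜ) := ⟨(u, b.1), fun hm => b.2 hm.2⟩ with hq_def
      have hCd : ((G □ H).induce ((A ×ˢ B)ᶜ)).edist p q = H.edist a.1 b.1 := by
        rw [hC p q, boxProd_edist]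
        simp [hp_def, hq_def, SimpleGraph.edist_self]
      rcases eq_or_ne (H.edist a.1 b.1) ⊤ with htop | htop
      · exact htop ▸ le_top
      · obtain ⟨w, hw⟩ := exists_walk_of_edist_ne_top (hCd ▸ htop)
        obtain ⟨hp, hq, hle⟩ := forward_claim' (B := B) w hu
          (by rw [hw, hCd])
        calc (H.induce Bᶜ).edist a b = (H.induce Bᶜ).edist ⟨a.1, hp⟩ ⟨b.1, hq⟩ := rfl
          _ ≤ w.length := hle
          _ = H.edist a.1 b.1 := by rw [hw, hCd]
  · rintro ⟨hGA, hHB⟩ p q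
    have hge : (G □ H).edist p.1 q.1 ≤ ((G □ H).induce ((A ×ˢ B)ᶜ)).edist p q :=
      hom_edist_le (Embedding.induce _).toHom p q
    refine le_antisymm ?_ hge
    rw [boxProd_edist]
    obtain ⟨⟨u, x⟩, hp⟩ := p
    obtain ⟨⟨v, y⟩, hq⟩ := q
    by_cases hu : u ∈ A
    · -- then x ∉ B
      have hx : x ∉ B := fun hxB => hp (Set.mk_mem_prod hu hxB)
      -- go along row x, then column v
      have step1 : ((G □ H).induce ((A ×ˢ B)ᶜ)).edist ⟨(u, x), hp⟩
          ⟨(v, x), fun hm => hx hm.2⟩ ≤ G.edist u v := hom_edist_le (rowHom A hx) u v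
      have step2 : ((G □ H).induce ((A ×ˢ B)ᶜ)).edist ⟨(v, x), fun hm => hx hm.2⟩
          ⟨(v, y), hq⟩ ≤ H.edist x y := by
        by_cases hv : v ∈ A
        · have hyB : y ∉ B := fun hyB => hq (Set.mk_mem_prod hv hyB)
          calc _ ≤ (H.induce Bᶜ).edist ⟨x, hx⟩ ⟨y, hyB⟩ :=
                hom_edist_le (colHom' (G := G) A v) ⟨x, hx⟩ ⟨y, hyB⟩
            _ = H.edist x y := hHB _ _
        · exact hom_edist_le (colHom B hv) x y
      exact le_trans SimpleGraph.edist_triangle (add_le_add step1 step2)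
    · -- u ∉ A : go along column u, then row y
      have step1 : ((G □ H).induce ((A ×ˢ B)ᶜ)).edist ⟨(u, x), hp⟩
          ⟨(u, y), fun hm => hu hm.1⟩ ≤ H.edist x y := hom_edist_le (colHom B hu) x y
      have step2 : ((G □ H).induce ((A ×ˢ B)ᶜ)).edist ⟨(u, y), fun hm => hu hm.1⟩
          ⟨(v, y), hq⟩ ≤ G.edist u v := by
        by_cases hyB : y ∈ B
        · have hv : v ∉ A := fun hv => hq (Set.mk_mem_prod hv hyB)
          calc _ ≤ (G.induce Aᶜ).edist ⟨u, hu⟩ ⟨v, hv⟩ :=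
                hom_edist_le (rowHom' (H := H) B y) ⟨u, hu⟩ ⟨v, hv⟩
            _ = G.edist u v := hGA _ _
        · exact hom_edist_le (rowHom A hyB) u v
      calc _ ≤ _ := SimpleGraph.edist_triangle
        _ ≤ H.edist x y + G.edist u v := add_le_add step1 step2
        _ = G.edist u v + H.edist x y := add_comm _ _
end

section
/- The Cartesian product G □ H is sequentially distance preserving if and only if both G and H are sequentially distance preserving. -/
open SimpleGraph

variable {α β : Type*}

namespace SdpAux


lemma edist_le_induce (G : SimpleGraph α) (S : Set α) (a b : S) :
    G.edist a.1 b.1 ≤ (G.induce S).edist a b := by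
  rcases eq_or_ne ((G.induce S).edist a b) ⊤ with h | h
  · simp [h]
  · obtain ⟨p, hp⟩ := SimpleGraph.exists_walk_of_edist_ne_top h
    calc G.edist a.1 b.1 ≤ (p.map (Embedding.induce S).toHom).length := edist_le _
    _ = _ := by rw [Walk.length_map, hp]

lemma isometricSet_of_le {G : SimpleGraph α} {S : Set α}
    (h : ∀ a b : S, (G.induce S).edist a b ≤ G.edist a.1 b.1) : IsometricSet G S :=
  fun a b => le_antisymm (h a b) (edist_le_induce G S a b)

lemma exists_induce_walk {G : SimpleGraph α} {S : Set α} {u v : α} (p : G.Walk u v)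
    (hs : ∀ x ∈ p.support, x ∈ S) :
    ∃ q : (G.induce S).Walk ⟨u, hs u p.start_mem_support⟩ ⟨v, hs v p.end_mem_support⟩,
      q.length = p.length := by
  induction p with
  | nil => exact ⟨Walk.nil, rfl⟩
  | @cons a b c h p ih =>
    obtain ⟨q, hq⟩ := ih (fun x hx => hs x (by simp [hx]))
    exact ⟨Walk.cons (by exact h) q, by show q.length + 1 = _; rw [hq]; rfl⟩

lemma le_length_boxProd_walk (G : SimpleGraph α) (H : SimpleGraph β) :
    ∀ {p q : α × β} (w : (G □ H).Walk p q),
    G.edist p.1 q.1 + H.edist p.2 q.2 ≤ w.length := by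
  intro p q w
  induction w with
  | nil => simp
  | @cons a b c h w ih =>
    rw [Walk.length_cons]
    rcases boxProd_adj.mp h with ⟨hG, he⟩ | ⟨hH, he2⟩
    · have h1 : G.edist a.1 c.1 ≤ 1 + G.edist b.1 c.1 := by
        calc G.edist a.1 c.1 ≤ G.edist a.1 b.1 + G.edist b.1 c.1 := SimpleGraph.edist_triangle
        _ = 1 + G.edist b.1 c.1 := by rw [edist_eq_one_iff_adj.mpr hG]
      calc G.edist a.1 c.1 + H.edist a.2 c.2 ≤ (1 + G.edist b.1 c.1) + H.edist b.2 c.2 := by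
            rw [← he]; exact add_le_add h1 le_rfl
      _ = (G.edist b.1 c.1 + H.edist b.2 c.2) + 1 := by ring
      _ ≤ (w.length : ℕ∞) + 1 := add_le_add ih le_rfl
      _ = ((w.length + 1 : ℕ) : ℕ∞) := by push_cast; ring
    · have h1 : H.edist a.2 c.2 ≤ 1 + H.edist b.2 c.2 := by
        calc H.edist a.2 c.2 ≤ H.edist a.2 b.2 + H.edist b.2 c.2 := SimpleGraph.edist_triangle
        _ = 1 + H.edist b.2 c.2 := by rw [edist_eq_one_iff_adj.mpr hH]
      calc G.edist a.1 c.1 + H.edist a.2 c.2 ≤ G.edist b.1 c.1 + (1 + H.edist b.2 c.2) := by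
            rw [← he2]; exact add_le_add le_rfl h1
      _ = (G.edist b.1 c.1 + H.edist b.2 c.2) + 1 := by ring
      _ ≤ (w.length : ℕ∞) + 1 := add_le_add ih le_rfl
      _ = ((w.length + 1 : ℕ) : ℕ∞) := by push_cast; ring

lemma boxProd_edist (G : SimpleGraph α) (H : SimpleGraph β) (p q : α × β) :
    (G □ H).edist p q = G.edist p.1 q.1 + H.edist p.2 q.2 := by
  refine le_antisymm ?_ ?_
  · rcases eq_or_ne (G.edist p.1 q.1) ⊤ with h1 | h1
    · simp [h1]
    rcases eq_or_ne (H.edist p.2 q.2) ⊤ with h2 | h2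
    · simp [h2]
    obtain ⟨w1, hw1⟩ := SimpleGraph.exists_walk_of_edist_ne_top h1
    obtain ⟨w2, hw2⟩ := SimpleGraph.exists_walk_of_edist_ne_top h2
    calc (G □ H).edist p q ≤ ((w1.boxProdLeft H p.2).append (w2.boxProdRight G q.1)).length :=
          edist_le _
    _ = G.edist p.1 q.1 + H.edist p.2 q.2 := by
        rw [Walk.length_append, show (w1.boxProdLeft H p.2).length = w1.length from
          Walk.length_map .., show (w2.boxProdRight G q.1).length = w2.length from Walk.length_map ..]
        push_cast
        rw [hw1, hw2]
  · rcases eq_or_ne ((G □ H).edist p q) ⊤ with h | h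
    · simp [h]
    obtain ⟨w, hw⟩ := SimpleGraph.exists_walk_of_edist_ne_top h
    rw [← hw]
    exact le_length_boxProd_walk G H w


lemma proj_fst {G : SimpleGraph α} {H : SimpleGraph β} {S : Set (α × β)} :
    ∀ {p q : ↥S} (w : ((G □ H).induce S).Walk p q),
    ∃ u : (G.induce (Prod.fst '' S)).Walk ⟨p.1.1, ⟨p.1, p.2, rfl⟩⟩ ⟨q.1.1, ⟨q.1, q.2, rfl⟩⟩,
      ∃ v : H.Walk p.1.2 q.1.2, u.length + v.length ≤ w.length := by
  intro p q w
  induction w with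
  | nil => exact ⟨Walk.nil, Walk.nil, le_rfl⟩
  | @cons a b c h w ih =>
    obtain ⟨u, v, huv⟩ := ih
    rcases (boxProd_adj.mp h : G.Adj a.1.1 b.1.1 ∧ a.1.2 = b.1.2 ∨ H.Adj a.1.2 b.1.2 ∧ a.1.1 = b.1.1) with
      ⟨hG, he⟩ | ⟨hH, he⟩
    · refine ⟨Walk.cons (show (G.induce (Prod.fst '' S)).Adj ⟨a.1.1, _⟩ ⟨b.1.1, _⟩ from hG) u,
        v.copy (by exact he.symm) rfl, ?_⟩
      simp only [Walk.length_cons, Walk.length_copy]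
      omega
    · refine ⟨u.copy (Subtype.ext he.symm) rfl, Walk.cons hH v, ?_⟩
      simp only [Walk.length_cons, Walk.length_copy]
      omega

lemma proj_snd {G : SimpleGraph α} {H : SimpleGraph β} {S : Set (α × β)} :
    ∀ {p q : ↥S} (w : ((G □ H).induce S).Walk p q),
    ∃ u : (H.induce (Prod.snd '' S)).Walk ⟨p.1.2, ⟨p.1, p.2, rfl⟩⟩ ⟨q.1.2, ⟨q.1, q.2, rfl⟩⟩,
      ∃ v : G.Walk p.1.1 q.1.1, u.length + v.length ≤ w.length := by
  intro p q w
  induction w with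
  | nil => exact ⟨Walk.nil, Walk.nil, le_rfl⟩
  | @cons a b c h w ih =>
    obtain ⟨u, v, huv⟩ := ih
    rcases (boxProd_adj.mp h : G.Adj a.1.1 b.1.1 ∧ a.1.2 = b.1.2 ∨ H.Adj a.1.2 b.1.2 ∧ a.1.1 = b.1.1) with
      ⟨hG, he⟩ | ⟨hH, he⟩
    · refine ⟨u.copy (Subtype.ext he.symm) rfl, Walk.cons hG v, ?_⟩
      simp only [Walk.length_cons, Walk.length_copy]
      omega
    · refine ⟨Walk.cons (show (H.induce (Prod.snd '' S)).Adj ⟨a.1.2, _⟩ ⟨b.1.2, _⟩ from hH) u,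
        v.copy (by exact he.symm) rfl, ?_⟩
      simp only [Walk.length_cons, Walk.length_copy]
      omega


lemma exists_geodesic_in_set {G : SimpleGraph α} (hG : G.Connected) {S : Set α}
    (hS : IsometricSet G S) {a b : α} (ha : a ∈ S) (hb : b ∈ S) :
    ∃ w : G.Walk a b, (w.length : ℕ∞) = G.edist a b ∧ (∀ x ∈ w.support, x ∈ S) ∧
      w.support.Nodup := by
  classical
  have key := hS ⟨a, ha⟩ ⟨b, hb⟩
  have hfin : (G.induce S).edist ⟨a, ha⟩ ⟨b, hb⟩ ≠ ⊤ := by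
    rw [key]; exact edist_ne_top_iff_reachable.mpr (hG.preconnected a b)
  obtain ⟨w0, hw0⟩ := SimpleGraph.exists_walk_of_edist_ne_top hfin
  have hlen : (w0.bypass.length : ℕ∞) = G.edist a b := by
    apply le_antisymm
    · rw [← key, ← hw0]
      exact_mod_cast w0.length_bypass_le
    · rw [← key]
      exact edist_le _
  refine ⟨w0.bypass.map (Embedding.induce S).toHom, ?_, ?_, ?_⟩
  · exact (congrArg (Nat.cast (R := ℕ∞)) (Walk.length_map (Embedding.induce S).toHom w0.bypass)).trans hlen
  · intro x hx
    replace hx := (congrArg (x ∈ ·) (Walk.support_map (Embedding.induce S).toHom w0.bypass)).mp hx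
    obtain ⟨y, _, rfl⟩ := List.mem_map.mp hx
    exact y.2
  · refine (congrArg List.Nodup (Walk.support_map (Embedding.induce S).toHom w0.bypass)).mpr ?_
    exact (w0.bypass_isPath.support_nodup).map Subtype.val_injective

lemma boxProdLeft_support {G : SimpleGraph α} (H : SimpleGraph β) {a c : α} (w : G.Walk a c)
    (x : β) : (w.boxProdLeft H x).support = w.support.map (fun v => (v, x)) := by
  exact Walk.support_map _ _

lemma boxProdRight_support (G : SimpleGraph α) {H : SimpleGraph β} {x y : β} (w : H.Walk x y)
    (c : α) : (w.boxProdRight G c).support = w.support.map (fun v => (c, v)) := by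
  exact Walk.support_map _ _


lemma cons_product (a : α) (lG : List α) (lH : List β) :
    ((a :: lG) ×ˢ lH) = lH.map (Prod.mk a) ++ lG ×ˢ lH := by
  simp [SProd.sprod, List.product]

lemma product_take (lH : List β) (r : ℕ) (hr : r ≤ lH.length) :
    ∀ (lG : List α) (q : ℕ) (hq : q < lG.length),
    (lG ×ˢ lH).take (q * lH.length + r) =
      ((lG.take q) ×ˢ lH) ++ (lH.take r).map (Prod.mk lG[q]) := by
  intro lG
  induction lG with
  | nil => intro q hq; simp at hq
  | cons a lG ih =>
    intro q hq
    cases q with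
    | zero =>
      rw [cons_product]
      rw [List.take_append_of_le_length (by simp; omega)]
      simp [List.map_take]
    | succ q =>
      rw [cons_product]
      have h1 : (q + 1) * lH.length + r = (lH.map (Prod.mk a)).length + (q * lH.length + r) := by
        simp; ring
      rw [h1, List.take_length_add_append, ih q (by simpa using hq)]
      rw [List.take_succ_cons, cons_product]
      simp [List.append_assoc]


lemma isometric_fst_image {G : SimpleGraph α} {H : SimpleGraph β}
    (hG : G.Connected) (hH : H.Connected) {S : Set (α × β)}
    (hS : IsometricSet (G □ H) S) : IsometricSet G (Prod.fst '' S) := by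
  apply isometricSet_of_le
  rintro ⟨a, ha⟩ ⟨b, hb⟩
  obtain ⟨pa, hpa, ha'⟩ := ha
  obtain ⟨pb, hpb, hb'⟩ := hb
  subst ha' hb'
  have key := hS ⟨pa, hpa⟩ ⟨pb, hpb⟩
  have hfin : ((G □ H).induce S).edist ⟨pa, hpa⟩ ⟨pb, hpb⟩ ≠ ⊤ := by
    rw [key]
    exact edist_ne_top_iff_reachable.mpr ((hG.boxProd hH).preconnected pa pb)
  obtain ⟨w, hw⟩ := SimpleGraph.exists_walk_of_edist_ne_top hfin
  obtain ⟨u, v, huv⟩ := proj_fst w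
  have h1 : (H.edist pa.2 pb.2) ≤ (v.length : ℕ∞) := edist_le v
  have h2 : (u.length : ℕ∞) + (v.length : ℕ∞) ≤ G.edist pa.1 pb.1 + H.edist pa.2 pb.2 := by
    calc (u.length : ℕ∞) + v.length = ((u.length + v.length : ℕ) : ℕ∞) := by push_cast; ring
    _ ≤ (w.length : ℕ∞) := by exact_mod_cast huv
    _ = _ := by rw [hw, key, boxProd_edist]
  have h3 : (u.length : ℕ∞) ≤ G.edist pa.1 pb.1 := by
    have hHfin : H.edist pa.2 pb.2 ≠ ⊤ :=
      edist_ne_top_iff_reachable.mpr (hH.preconnected pa.2 pb.2)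
    have h4 := le_trans (add_le_add (le_refl ((u.length : ℕ∞))) h1) h2
    exact (WithTop.add_le_add_iff_right hHfin).mp h4
  exact le_trans (edist_le u) h3

lemma isometric_snd_image {G : SimpleGraph α} {H : SimpleGraph β}
    (hG : G.Connected) (hH : H.Connected) {S : Set (α × β)}
    (hS : IsometricSet (G □ H) S) : IsometricSet H (Prod.snd '' S) := by
  apply isometricSet_of_le
  rintro ⟨a, ha⟩ ⟨b, hb⟩
  obtain ⟨pa, hpa, ha'⟩ := ha
  obtain ⟨pb, hpb, hb'⟩ := hb
  subst ha' hb'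
  have key := hS ⟨pa, hpa⟩ ⟨pb, hpb⟩
  have hfin : ((G □ H).induce S).edist ⟨pa, hpa⟩ ⟨pb, hpb⟩ ≠ ⊤ := by
    rw [key]
    exact edist_ne_top_iff_reachable.mpr ((hG.boxProd hH).preconnected pa pb)
  obtain ⟨w, hw⟩ := SimpleGraph.exists_walk_of_edist_ne_top hfin
  obtain ⟨u, v, huv⟩ := proj_snd w
  have h1 : (G.edist pa.1 pb.1) ≤ (v.length : ℕ∞) := edist_le v
  have h2 : (u.length : ℕ∞) + (v.length : ℕ∞) ≤ H.edist pa.2 pb.2 + G.edist pa.1 pb.1 := by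
    calc (u.length : ℕ∞) + v.length = ((u.length + v.length : ℕ) : ℕ∞) := by push_cast; ring
    _ ≤ (w.length : ℕ∞) := by exact_mod_cast huv
    _ = _ := by rw [hw, key, boxProd_edist]; ring
  have h3 : (u.length : ℕ∞) ≤ H.edist pa.2 pb.2 := by
    have hGfin : G.edist pa.1 pb.1 ≠ ⊤ :=
      edist_ne_top_iff_reachable.mpr (hG.preconnected pa.1 pb.1)
    have h4 := le_trans (add_le_add (le_refl ((u.length : ℕ∞))) h1) h2
    exact (WithTop.add_le_add_iff_right hGfin).mp h4
  exact le_trans (edist_le u) h3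


lemma chain_to_sdp [Fintype α] (G : SimpleGraph α) (f : ℕ → Set α)
    (h0 : f 0 = Set.univ) (hN : ∃ N, f N = ∅) (hmono : ∀ t, f (t + 1) ⊆ f t)
    (hstep : ∀ t, (f t \ f (t + 1)).Subsingleton) (hiso : ∀ t, IsometricSet G (f t)) :
    ∃ l : List α, l.Nodup ∧ (∀ v, v ∈ l) ∧ ∀ s, IsometricSet G {v | v ∉ l.take s} := by
  classical
  obtain ⟨N, hNe⟩ := hN
  have hanti : Antitone f := antitone_nat_of_succ_le hmono
  have hdrop : ∀ a : α, ∃ t, a ∉ f t := fun a => ⟨N, by simp [hNe]⟩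
  set τ : α → ℕ := fun a => Nat.find (hdrop a) with hτ
  have hmem : ∀ (a : α) (t : ℕ), a ∈ f t ↔ t < τ a := by
    intro a t
    constructor
    · intro h
      by_contra hlt
      exact (Nat.find_spec (hdrop a)) (hanti (not_lt.mp hlt) h)
    · intro h
      exact not_not.mp (Nat.find_min (hdrop a) h)
  have hpos : ∀ a, 1 ≤ τ a := by
    intro a
    have h1 : a ∈ f 0 := by rw [h0]; trivial
    have := (hmem a 0).mp h1
    omega
  have hinj : Function.Injective τ := by
    intro a b hab
    by_contra hne
    have h1a : a ∈ f (τ a - 1) := (hmem a _).mpr (by have := hpos a; omega)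
    have h1b : b ∈ f (τ a - 1) := (hmem b _).mpr (by have := hpos b; omega)
    have h2a : a ∉ f (τ a - 1 + 1) := by
      rw [hmem]; have := hpos a; omega
    have h2b : b ∉ f (τ a - 1 + 1) := by
      rw [hmem]; have := hpos b; omega
    exact hne (hstep (τ a - 1) ⟨h1a, h2a⟩ ⟨h1b, h2b⟩)
  -- sort by τ
  set r : α → α → Prop := fun a b => τ a ≤ τ b with hr
  haveI : DecidableRel r := fun a b => Nat.decLe _ _
  haveI : IsTrans α r := ⟨fun _ _ _ h1 h2 => le_trans h1 h2⟩
  haveI : Std.Antisymm r := ⟨fun _ _ h1 h2 => hinj (le_antisymm h1 h2)⟩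
  haveI : Std.Total r := ⟨fun a b => le_total _ _⟩
  set l : List α := Finset.univ.sort r with hl
  have hnd : l.Nodup := Finset.sort_nodup _ r
  have hcomp : ∀ v : α, v ∈ l := fun v => (Finset.mem_sort (s := Finset.univ) r).mpr (Finset.mem_univ v)
  have hsorted : List.Pairwise r l := Finset.pairwise_sort _ r
  have hstrict : ∀ (i j : ℕ) (hi : i < l.length) (hj : j < l.length), i < j →
      τ (l.get ⟨i, hi⟩) < τ (l.get ⟨j, hj⟩) := by
    intro i j hi hj hij
    have h1 : r (l.get ⟨i, hi⟩) (l.get ⟨j, hj⟩) :=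
      List.Pairwise.rel_get_of_lt hsorted (Fin.mk_lt_mk.mpr hij)
    have h2 : l.get ⟨i, hi⟩ ≠ l.get ⟨j, hj⟩ := by
      intro h
      have := (List.Nodup.get_inj_iff hnd).mp h
      simp only [Fin.mk.injEq] at this
      omega
    exact lt_of_le_of_ne h1 (fun hh => h2 (hinj hh))
  refine ⟨l, hnd, hcomp, ?_⟩
  intro s
  by_cases hs : s < l.length
  · have hset : {v | v ∉ l.take s} = f (τ (l.get ⟨s, hs⟩) - 1) := by
      ext v
      simp only [Set.mem_setOf_eq]
      obtain ⟨j, hjv⟩ := List.mem_iff_get.mp (hcomp v)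
      have hmemtake : v ∈ l.take s ↔ (j : ℕ) < s := by
        constructor
        · intro hv
          obtain ⟨i, hi, hiv⟩ := List.mem_take_iff_getElem.mp hv
          have hi2 : i < l.length := lt_of_lt_of_le hi (min_le_right _ _)
          have : i = (j : ℕ) := by
            apply (List.Nodup.getElem_inj_iff hnd).mp
            rw [hiv, ← hjv]
            rfl
          omega
        · intro hv
          refine List.mem_take_iff_getElem.mpr ⟨j, lt_min hv j.2, ?_⟩
          rw [← hjv]
          rfl
      have hineq : v ∉ l.take s ↔ τ (l.get ⟨s, hs⟩) ≤ τ v := by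
        rw [hmemtake]
        constructor
        · intro h
          rw [← hjv]
          rcases eq_or_lt_of_le (not_lt.mp h) with h' | h'
          · rw [show (⟨s, hs⟩ : Fin l.length) = j from Fin.ext h']
          · exact le_of_lt (hstrict s j hs j.2 h')
        · intro h
          intro hc
          have := hstrict j s j.2 hs hc
          rw [hjv] at this
          omega
      rw [hineq, hmem]
      have := hpos (l.get ⟨s, hs⟩)
      omega
    rw [hset]; exact hiso _
  · have hset : {v | v ∉ l.take s} = f N := by
      rw [List.take_of_length_le (by omega), hNe]
      ext v
      simp [hcomp v]
    rw [hset]; exact hiso _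


lemma forward_isometric {G : SimpleGraph α} {H : SimpleGraph β}
    (hG : G.Connected) (hH : H.Connected) {lG : List α} {lH : List β}
    (hGnd : lG.Nodup) (hGc : ∀ v, v ∈ lG) (hGiso : ∀ s, IsometricSet G {v | v ∉ lG.take s})
    (hHnd : lH.Nodup) (hHc : ∀ v, v ∈ lH) (hHiso : ∀ s, IsometricSet H {v | v ∉ lH.take s})
    (s : ℕ) : IsometricSet (G □ H) {p | p ∉ (lG ×ˢ lH).take s} := by
  by_cases hs : s < lG.length * lH.length
  swap
  · -- complement is empty
    have hempty : {p : α × β | p ∉ (lG ×ˢ lH).take s} = ∅ := by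
      ext p
      simp only [Set.mem_setOf_eq, Set.mem_empty_iff_false, iff_false, not_not]
      rw [List.take_of_length_le (by rw [List.length_product]; omega)]
      exact List.mem_product.mpr ⟨hGc p.1, hHc p.2⟩
    rintro ⟨p, hp⟩ b
    exfalso
    rw [hempty] at hp
    exact hp
  · have hn : 0 < lH.length := by
      obtain ⟨x⟩ := hH.nonempty
      exact List.length_pos_of_mem (hHc x)
    set n := lH.length with hnn
    set q := s / n with hqq
    set r := s % n with hrr
    have hr : r < n := Nat.mod_lt _ hn
    have hq : q < lG.length := by
      rw [hqq, Nat.div_lt_iff_lt_mul hn]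
      calc s < lG.length * n := hs
      _ = _ := by ring
    have hsplit : q * n + r = s := by
      rw [hqq, hrr]; rw [mul_comm]; exact Nat.div_add_mod s n
    set g := lG[q] with hg
    have htake : (lG ×ˢ lH).take s =
        ((lG.take q) ×ˢ lH) ++ (lH.take r).map (Prod.mk g) := by
      rw [← hsplit]
      exact product_take lH r (le_of_lt hr) lG q hq
    set A : Set α := {v | v ∉ lG.take (q + 1)} with hA
    set B : Set β := {v | v ∉ lH.take r} with hB
    set C : Set (α × β) := {p | p ∉ (lG ×ˢ lH).take s} with hC
    have htakesucc : lG.take (q + 1) = lG.take q ++ [g] := by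
      rw [← List.take_concat_get hq]; simp [hg]
    have hgq : g ∉ lG.take q := by
      intro hmem
      obtain ⟨i, hi, hiv⟩ := List.mem_take_iff_getElem.mp hmem
      have hi2 : i < lG.length := lt_of_lt_of_le hi (min_le_right _ _)
      have : i = q := (List.Nodup.getElem_inj_iff hGnd).mp (by rw [hiv])
      omega
    have hA_iff : ∀ v, v ∈ A ↔ v ∉ lG.take q ∧ v ≠ g := by
      intro v
      rw [hA]
      simp only [Set.mem_setOf_eq, htakesucc, List.mem_append, List.mem_singleton]
      tauto
    have hCdesc : ∀ p : α × β, p ∈ C ↔ p.1 ∈ A ∨ (p.1 = g ∧ p.2 ∈ B) := by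
      rintro ⟨a, x⟩
      have h3 : x ∈ lH := hHc x
      rw [hC]
      simp only [Set.mem_setOf_eq, htake, List.mem_append, not_or]
      constructor
      · rintro ⟨h1, h2⟩
        have ha : a ∉ lG.take q := fun h => h1 (List.mem_product.mpr ⟨h, h3⟩)
        by_cases he : a = g
        · subst he
          refine Or.inr ⟨rfl, ?_⟩
          intro hxr
          exact h2 (List.mem_map.mpr ⟨x, hxr, rfl⟩)
        · exact Or.inl ((hA_iff a).mpr ⟨ha, he⟩)
      · intro hp
        constructor
        · intro hmem
          have hmem1 := (List.mem_product.mp hmem).1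
          rcases hp with hA1 | ⟨he, -⟩
          · exact ((hA_iff a).mp hA1).1 hmem1
          · rw [he] at hmem1
            exact hgq hmem1
        · intro hmem
          obtain ⟨u, hu, huv⟩ := List.mem_map.mp hmem
          rw [Prod.ext_iff] at huv
          obtain ⟨h1, h2⟩ := huv
          rcases hp with hA1 | ⟨-, hB1⟩
          · exact ((hA_iff a).mp hA1).2 h1.symm
          · have h2' : u = x := h2
            rw [hB] at hB1
            exact hB1 (h2' ▸ hu)
    -- walk constructions
    have hAC : ∀ p : α × β, p.1 ∈ A → p ∈ C := fun p h => (hCdesc p).mpr (Or.inl h)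
    have hcase1 : ∀ (a : α) (x : β) (c : α) (y : β), a ∈ A → c ∈ A →
        ∃ w : (G □ H).Walk (a, x) (c, y),
          (w.length : ℕ∞) = G.edist a c + H.edist x y ∧ ∀ v ∈ w.support, v ∈ C := by
      intro a x c y ha hc
      obtain ⟨wG, hwGl, hwGs, -⟩ := exists_geodesic_in_set hG (hGiso (q + 1)) ha hc
      have hxu : x ∈ {v : β | v ∉ lH.take 0} := by simp
      have hyu : y ∈ {v : β | v ∉ lH.take 0} := by simp
      obtain ⟨wH, hwHl, -, -⟩ := exists_geodesic_in_set hH (hHiso 0) hxu hyu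
      refine ⟨(wG.boxProdLeft H x).append (wH.boxProdRight G c), ?_, ?_⟩
      · rw [Walk.length_append, show (wG.boxProdLeft H x).length = wG.length from
          Walk.length_map .., show (wH.boxProdRight G c).length = wH.length from Walk.length_map ..]
        push_cast
        rw [hwGl, hwHl]
      · intro v hv
        rw [Walk.mem_support_append_iff] at hv
        rcases hv with hv | hv
        · rw [boxProdLeft_support] at hv
          obtain ⟨u, hu, rfl⟩ := List.mem_map.mp hv
          exact hAC _ (hwGs u hu)
        · rw [boxProdRight_support] at hv
          obtain ⟨u, hu, rfl⟩ := List.mem_map.mp hv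
          exact hAC _ hc
    have hcase2 : ∀ (x : β) (c : α) (y : β), x ∈ B → c ∈ A →
        ∃ w : (G □ H).Walk (g, x) (c, y),
          (w.length : ℕ∞) = G.edist g c + H.edist x y ∧ ∀ v ∈ w.support, v ∈ C := by
      intro x c y hx hc
      have hgA' : g ∈ {v : α | v ∉ lG.take q} := hgq
      have hcA' : c ∈ {v : α | v ∉ lG.take q} := by
        have := ((hA_iff c).mp hc).1
        exact this
      obtain ⟨wG, hwGl, hwGs, hwGnd⟩ := exists_geodesic_in_set hG (hGiso q) hgA' hcA'
      have hxu : x ∈ {v : β | v ∉ lH.take 0} := by simp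
      have hyu : y ∈ {v : β | v ∉ lH.take 0} := by simp
      obtain ⟨wH, hwHl, -, -⟩ := exists_geodesic_in_set hH (hHiso 0) hxu hyu
      refine ⟨(wG.boxProdLeft H x).append (wH.boxProdRight G c), ?_, ?_⟩
      · rw [Walk.length_append, show (wG.boxProdLeft H x).length = wG.length from
          Walk.length_map .., show (wH.boxProdRight G c).length = wH.length from Walk.length_map ..]
        push_cast
        rw [hwGl, hwHl]
      · intro v hv
        rw [Walk.mem_support_append_iff] at hv
        rcases hv with hv | hv
        · rw [boxProdLeft_support] at hv
          obtain ⟨u, hu, rfl⟩ := List.mem_map.mp hv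
          -- u is either g (the head) or in the tail, hence ≠ g
          rw [wG.support_eq_cons] at hu
          rcases List.mem_cons.mp hu with rfl | hu
          · exact (hCdesc _).mpr (Or.inr ⟨rfl, hx⟩)
          · have hune : u ≠ g := by
              intro h
              subst h
              have := wG.support_eq_cons ▸ hwGnd
              rw [List.nodup_cons] at this
              exact this.1 hu
            have huA' : u ∈ {v : α | v ∉ lG.take q} := hwGs u (by
              rw [wG.support_eq_cons]; exact List.mem_cons_of_mem _ hu)
            exact hAC _ ((hA_iff u).mpr ⟨huA', hune⟩)
        · rw [boxProdRight_support] at hv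
          obtain ⟨u, hu, rfl⟩ := List.mem_map.mp hv
          exact hAC _ hc
    have hcase4 : ∀ (x y : β), x ∈ B → y ∈ B →
        ∃ w : (G □ H).Walk (g, x) (g, y),
          (w.length : ℕ∞) = G.edist g g + H.edist x y ∧ ∀ v ∈ w.support, v ∈ C := by
      intro x y hx hy
      obtain ⟨wH, hwHl, hwHs, -⟩ := exists_geodesic_in_set hH (hHiso r) hx hy
      refine ⟨wH.boxProdRight G g, ?_, ?_⟩
      · rw [show (wH.boxProdRight G g).length = wH.length from Walk.length_map .., SimpleGraph.edist_self, zero_add, hwHl]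
      · intro v hv
        rw [boxProdRight_support] at hv
        obtain ⟨u, hu, rfl⟩ := List.mem_map.mp hv
        exact (hCdesc _).mpr (Or.inr ⟨rfl, hwHs u hu⟩)
    have hgoal : ∀ (p p' : α × β), p ∈ C → p' ∈ C →
        ∃ w : (G □ H).Walk p p',
          (w.length : ℕ∞) = G.edist p.1 p'.1 + H.edist p.2 p'.2 ∧
          ∀ v ∈ w.support, v ∈ C := by
      rintro ⟨a, x⟩ ⟨c, y⟩ hp hp'
      rcases (hCdesc _).mp hp with ha | ⟨ha, hx⟩ <;>
        rcases (hCdesc _).mp hp' with hc | ⟨hc, hy⟩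
      · exact hcase1 a x c y ha hc
      · subst hc
        obtain ⟨w, hwl, hws⟩ := hcase2 y a x hy ha
        refine ⟨w.reverse, ?_, ?_⟩
        · rw [Walk.length_reverse, hwl]
          show G.edist g a + H.edist y x = G.edist a g + H.edist x y
          rw [SimpleGraph.edist_comm (G := G), SimpleGraph.edist_comm (G := H)]
        · intro v hv
          rw [Walk.support_reverse, List.mem_reverse] at hv
          exact hws v hv
      · subst ha
        exact hcase2 x c y hx hc
      · subst ha; subst hc
        exact hcase4 x y hx hy
    apply isometricSet_of_le
    intro a b
    obtain ⟨w, hwl, hws⟩ := hgoal a.1 b.1 a.2 b.2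
    obtain ⟨w', hw'⟩ := exists_induce_walk w hws
    calc ((G □ H).induce C).edist a b ≤ (w'.length : ℕ∞) := edist_le w'
    _ = (w.length : ℕ∞) := by rw [hw']
    _ = (G □ H).edist a.1 b.1 := by rw [hwl, boxProd_edist]


lemma mem_take_succ_not_take {L : List (α × β)} (hL : L.Nodup) {t : ℕ} {p : α × β}
    (h1 : p ∈ L.take (t + 1)) (h2 : p ∉ L.take t) : ∃ ht : t < L.length, p = L[t] := by
  obtain ⟨i, hi, hiv⟩ := List.mem_take_iff_getElem.mp h1
  have hi2 : i < L.length := lt_of_lt_of_le hi (min_le_right _ _)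
  have hit : i = t := by
    by_contra hne
    have hilt : i < t := by omega
    exact h2 (List.mem_take_iff_getElem.mpr ⟨i, lt_min hilt hi2, hiv⟩)
  subst hit
  exact ⟨hi2, hiv.symm⟩


end SdpAux

theorem stmt_10 (G : SimpleGraph α) (H : SimpleGraph β)
    [Fintype α] [Fintype β] :
    IsSDP (G □ H) ↔ IsSDP G ∧ IsSDP H := by
  constructor
  · rintro ⟨hconn, L, hLnd, hLc, hLiso⟩
    obtain ⟨hGconn, hHconn⟩ := connected_boxProd.mp hconn
    haveI hne1 := hGconn.nonempty
    haveI hne2 := hHconn.nonempty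
    have hstep : ∀ t : ℕ, ∀ pa : α × β, pa ∉ L.take t → pa ∈ L.take (t + 1) →
        ∃ ht : t < L.length, pa = L[t] := fun t pa h2 h1 =>
      SdpAux.mem_take_succ_not_take hLnd h1 h2
    have hmono : ∀ t : ℕ, {p : α × β | p ∉ L.take (t + 1)} ⊆ {p | p ∉ L.take t} := by
      intro t p hp hcon
      exact hp (List.IsPrefix.subset (List.take_prefix_take_left (l := L) (Nat.le_succ t)) hcon)
    have h0 : {p : α × β | p ∉ L.take 0} = Set.univ := by simp
    have hend : {p : α × β | p ∉ L.take L.length} = ∅ := by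
      ext p; simp [hLc p]
    constructor
    · refine ⟨hGconn, ?_⟩
      have c0 : (fun t => Prod.fst '' {p : α × β | p ∉ L.take t}) 0 = Set.univ := by
        simp only [h0, Set.image_univ]
        exact Prod.fst_surjective.range_eq
      have cN : ∃ N, (fun t => Prod.fst '' {p : α × β | p ∉ L.take t}) N = ∅ :=
        ⟨L.length, by simp only [hend, Set.image_empty]⟩
      have cmono : ∀ t, (fun t => Prod.fst '' {p : α × β | p ∉ L.take t}) (t + 1) ⊆
          (fun t => Prod.fst '' {p : α × β | p ∉ L.take t}) t :=
        fun t => Set.image_mono (hmono t)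
      have cstep : ∀ t, ((fun t => Prod.fst '' {p : α × β | p ∉ L.take t}) t \
          (fun t => Prod.fst '' {p : α × β | p ∉ L.take t}) (t + 1)).Subsingleton := by
        intro t
        rintro a ⟨⟨pa, hpa, rfl⟩, ha2⟩ b ⟨⟨pb, hpb, rfl⟩, hb2⟩
        have hpa' : pa ∈ L.take (t + 1) := by
          by_contra h
          exact ha2 ⟨pa, h, rfl⟩
        have hpb' : pb ∈ L.take (t + 1) := by
          by_contra h
          exact hb2 ⟨pb, h, rfl⟩
        obtain ⟨ht, hpaL⟩ := hstep t pa hpa hpa'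
        obtain ⟨ht2, hpbL⟩ := hstep t pb hpb hpb'
        rw [hpaL, hpbL]
      have ciso : ∀ t, IsometricSet G ((fun t => Prod.fst '' {p : α × β | p ∉ L.take t}) t) :=
        fun t => SdpAux.isometric_fst_image hGconn hHconn (hLiso t)
      obtain ⟨l, h1, h2, h3⟩ := SdpAux.chain_to_sdp G _ c0 cN cmono cstep ciso
      exact ⟨l, h1, h2, h3⟩
    · refine ⟨hHconn, ?_⟩
      have c0 : (fun t => Prod.snd '' {p : α × β | p ∉ L.take t}) 0 = Set.univ := by
        simp only [h0, Set.image_univ]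
        exact Prod.snd_surjective.range_eq
      have cN : ∃ N, (fun t => Prod.snd '' {p : α × β | p ∉ L.take t}) N = ∅ :=
        ⟨L.length, by simp only [hend, Set.image_empty]⟩
      have cmono : ∀ t, (fun t => Prod.snd '' {p : α × β | p ∉ L.take t}) (t + 1) ⊆
          (fun t => Prod.snd '' {p : α × β | p ∉ L.take t}) t :=
        fun t => Set.image_mono (hmono t)
      have cstep : ∀ t, ((fun t => Prod.snd '' {p : α × β | p ∉ L.take t}) t \
          (fun t => Prod.snd '' {p : α × β | p ∉ L.take t}) (t + 1)).Subsingleton := by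
        intro t
        rintro a ⟨⟨pa, hpa, rfl⟩, ha2⟩ b ⟨⟨pb, hpb, rfl⟩, hb2⟩
        have hpa' : pa ∈ L.take (t + 1) := by
          by_contra h
          exact ha2 ⟨pa, h, rfl⟩
        have hpb' : pb ∈ L.take (t + 1) := by
          by_contra h
          exact hb2 ⟨pb, h, rfl⟩
        obtain ⟨ht, hpaL⟩ := hstep t pa hpa hpa'
        obtain ⟨ht2, hpbL⟩ := hstep t pb hpb hpb'
        rw [hpaL, hpbL]
      have ciso : ∀ t, IsometricSet H ((fun t => Prod.snd '' {p : α × β | p ∉ L.take t}) t) :=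
        fun t => SdpAux.isometric_snd_image hGconn hHconn (hLiso t)
      obtain ⟨l, h1, h2, h3⟩ := SdpAux.chain_to_sdp H _ c0 cN cmono cstep ciso
      exact ⟨l, h1, h2, h3⟩
  · rintro ⟨⟨hGconn, lG, hGnd, hGc, hGiso⟩, ⟨hHconn, lH, hHnd, hHc, hHiso⟩⟩
    refine ⟨hGconn.boxProd hHconn, lG ×ˢ lH, List.Nodup.product hGnd hHnd,
      fun p => List.mem_product.mpr ⟨hGc p.1, hHc p.2⟩,
      fun s => SdpAux.forward_isometric hGconn hHconn hGnd hGc hGiso hHnd hHc hHiso s⟩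
end

section
/- If G □ H is sequentially distance preserving, then G is sequentially distance preserving; moreover, for any fixed vertex x of H and any sdp sequence of G □ H, the subsequence of vertices of the form (u_i, x) projects to an sdp sequence u_1,...,u_n of G. -/
open SimpleGraph

variable {α β : Type*}

lemma aux_edist_le_induce (G : SimpleGraph α) (S : Set α) (a b : S) :
    G.edist a.1 b.1 ≤ (G.induce S).edist a b := by
  rcases eq_or_ne ((G.induce S).edist a b) ⊤ with h | h
  · simp [h]
  · obtain ⟨p, hp⟩ := exists_walk_of_edist_ne_top h
    calc G.edist a.1 b.1 ≤ (p.map ⟨Subtype.val, fun h => h⟩).length := edist_le _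
      _ = (G.induce S).edist a b := by rw [Walk.length_map, hp]

lemma aux_lift_walk (G : SimpleGraph α) (A : Set α) :
    ∀ {a b : α} (W : G.Walk a b), (∀ u ∈ W.support, u ∈ A) →
      ∀ (ha : a ∈ A) (hb : b ∈ A),
        (G.induce A).edist ⟨a, ha⟩ ⟨b, hb⟩ ≤ W.length := by
  intro a b W
  induction W with
  | nil => intro _ ha hb; simp [edist_self]
  | @cons u v w h W ih =>
    intro hsup ha hb
    have hv : v ∈ A := hsup v (by simp)
    have h1 : (G.induce A).Adj ⟨u, ha⟩ ⟨v, hv⟩ := h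
    calc (G.induce A).edist ⟨u, ha⟩ ⟨w, hb⟩
        ≤ (G.induce A).edist ⟨u, ha⟩ ⟨v, hv⟩ + (G.induce A).edist ⟨v, hv⟩ ⟨w, hb⟩ :=
          SimpleGraph.edist_triangle
      _ ≤ 1 + W.length := by
          gcongr
          · exact edist_le h1.toWalk
          · exact ih (fun u hu => hsup u (by simp [hu])) hv hb
      _ = (W.cons h).length := by simp [Walk.length_cons]; ring

lemma aux_proj (G : SimpleGraph α) (H : SimpleGraph β) :
    ∀ {p q : α × β} (W : (G □ H).Walk p q),
      ∃ W' : G.Walk p.1 q.1, W'.length ≤ W.length ∧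
        (∀ u ∈ W'.support, ∃ v ∈ W.support, v.1 = u) ∧
        (W'.length = W.length → ∀ v ∈ W.support, v.2 = p.2) := by
  intro p q W
  induction W with
  | nil =>
    refine ⟨Walk.nil, le_refl _, ?_, ?_⟩
    · intro z hz
      simp only [Walk.support_nil, List.mem_singleton] at hz
      subst hz
      exact ⟨_, by simp, rfl⟩
    · intro _ v hv
      simp only [Walk.support_nil, List.mem_singleton] at hv
      simp [hv]
  | @cons u v w h W ih =>
    obtain ⟨W', hlen, hsup, heq⟩ := ih
    rcases (boxProd_adj.mp h) with ⟨hG, hsnd⟩ | ⟨hH, hfst⟩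
    · refine ⟨W'.cons hG, by simpa using Nat.add_le_add_right hlen 1, ?_, ?_⟩
      · intro z hz
        rw [Walk.support_cons] at hz
        rcases List.mem_cons.mp hz with hz | hz
        · exact ⟨u, by simp, hz.symm⟩
        · obtain ⟨y, hy, hy2⟩ := hsup z hz
          exact ⟨y, by simp [hy], hy2⟩
      · intro hl z hz
        simp only [Walk.length_cons] at hl
        have : W'.length = W.length := by omega
        rw [Walk.support_cons] at hz
        rcases List.mem_cons.mp hz with hz | hz
        · simp [hz]
        · rw [heq this z hz, ← hsnd]
    · refine ⟨W'.copy hfst.symm rfl, ?_, ?_, ?_⟩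
      · simp only [Walk.length_copy, Walk.length_cons]; omega
      · intro z hz
        rw [Walk.support_copy] at hz
        obtain ⟨y, hy, hy2⟩ := hsup z hz
        exact ⟨y, by simp [hy], hy2⟩
      · intro hl
        simp only [Walk.length_copy, Walk.length_cons] at hl
        omega

lemma aux_list {γ : Type*} (p : γ → Bool) :
    ∀ (l : List γ) (s : ℕ), ∃ t, (l.take t).filter p = (l.filter p).take s := by
  intro l
  induction l with
  | nil => intro s; exact ⟨0, by simp⟩
  | cons a l ih =>
    intro s
    cases s with
    | zero => exact ⟨0, by simp⟩
    | succ s =>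
      by_cases hp : p a
      · obtain ⟨t, ht⟩ := ih s
        exact ⟨t + 1, by simp [List.filter_cons, hp, ht]⟩
      · obtain ⟨t, ht⟩ := ih (s + 1)
        exact ⟨t + 1, by simp [List.filter_cons, hp, ht]⟩

theorem stmt_11 (G : SimpleGraph α) (H : SimpleGraph β)
    [Fintype α] [Fintype β] [DecidableEq β]
    (hconn : (G □ H).Connected)
    (L : List (α × β)) (hL : IsSdpList (G □ H) L) (x : β) :
    G.Connected ∧
      IsSdpList G ((L.filter (fun p => decide (p.2 = x))).map Prod.fst) := by
  obtain ⟨hGc, hHc⟩ := (connected_boxProd).mp hconn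
  obtain ⟨hnd, hmem, hiso⟩ := hL
  refine ⟨hGc, ?_, ?_, ?_⟩
  · refine List.Nodup.map_on ?_ (hnd.filter _)
    intro a ha b hb hab
    have ha2 : a.2 = x := by simpa using (List.mem_filter.mp ha).2
    have hb2 : b.2 = x := by simpa using (List.mem_filter.mp hb).2
    exact Prod.ext hab (ha2.trans hb2.symm)
  · intro v
    exact List.mem_map.mpr ⟨(v, x), List.mem_filter.mpr ⟨hmem (v, x), by simp⟩, rfl⟩
  · intro s
    obtain ⟨t, ht⟩ := aux_list (fun p : α × β => decide (p.2 = x)) L s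
    have key : ∀ v : α,
        (v ∉ (((L.filter (fun p => decide (p.2 = x))).map Prod.fst).take s)) ↔
          ((v, x) ∉ L.take t) := by
      intro v
      rw [not_iff_not]
      constructor
      · intro hv
        rw [← List.map_take, ← ht] at hv
        obtain ⟨q, hq, hq1⟩ := List.mem_map.mp hv
        have hq2 : q.2 = x := by simpa using (List.mem_filter.mp hq).2
        have : q = (v, x) := Prod.ext hq1 hq2
        rw [this] at hq
        exact (List.mem_filter.mp hq).1
        
      · intro hv
        rw [← List.map_take, ← ht]
        exact List.mem_map.mpr ⟨(v, x), List.mem_filter.mpr ⟨hv, by simp⟩, rfl⟩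
    set A : Set α :=
      {v : α | v ∉ (((L.filter (fun p => decide (p.2 = x))).map Prod.fst).take s)} with hA
    set S : Set (α × β) := {v : α × β | v ∉ L.take t} with hS
    intro a b
    have haS : (a.1, x) ∈ S := (key a.1).mp a.2
    have hbS : (b.1, x) ∈ S := (key b.1).mp b.2
    -- distance facts
    have hd : G.edist a.1 b.1 ≠ ⊤ :=
      edist_ne_top_iff_reachable.mpr (hGc.preconnected a.1 b.1)
    obtain ⟨p, hp⟩ := exists_walk_of_edist_ne_top hd
    have h1 : (G □ H).edist (a.1, x) (b.1, x) ≤ G.edist a.1 b.1 := by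
      calc (G □ H).edist (a.1, x) (b.1, x) ≤ (p.boxProdLeft H x).length := edist_le _
        _ = G.edist a.1 b.1 := by unfold Walk.boxProdLeft; erw [Walk.length_map, hp]
    have h2 : G.edist a.1 b.1 ≤ (G □ H).edist (a.1, x) (b.1, x) := by
      have hne : (G □ H).edist (a.1, x) (b.1, x) ≠ ⊤ := (h1.trans_lt hd.lt_top).ne
      obtain ⟨q, hq⟩ := exists_walk_of_edist_ne_top hne
      obtain ⟨W', hlen, -, -⟩ := aux_proj G H q
      calc G.edist a.1 b.1 ≤ W'.length := edist_le W'
        _ ≤ (q.length : ℕ∞) := by exact_mod_cast hlen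
        _ = _ := hq
    have hbox : (G □ H).edist (a.1, x) (b.1, x) = G.edist a.1 b.1 := le_antisymm h1 h2
    have hSiso := hiso t ⟨(a.1, x), haS⟩ ⟨(b.1, x), hbS⟩
    have hSd : ((G □ H).induce S).edist ⟨(a.1, x), haS⟩ ⟨(b.1, x), hbS⟩ = G.edist a.1 b.1 :=
      hSiso.trans hbox
    -- get a geodesic in the induced subgraph
    have hne : ((G □ H).induce S).edist ⟨(a.1, x), haS⟩ ⟨(b.1, x), hbS⟩ ≠ ⊤ := by
      rw [hSd]; exact hd
    obtain ⟨W, hW⟩ := exists_walk_of_edist_ne_top hne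
    rw [hSd] at hW
    set W₀ : (G □ H).Walk (a.1, x) (b.1, x) := W.map ⟨Subtype.val, fun h => h⟩ with hW₀
    have hW0len : (W₀.length : ℕ∞) = G.edist a.1 b.1 := by
      rw [hW₀, Walk.length_map, hW]
    obtain ⟨W', hlen, hsup, heq⟩ := aux_proj G H W₀
    have e1 : (W'.length : ℕ∞) = G.edist a.1 b.1 :=
      le_antisymm ((by exact_mod_cast hlen : (W'.length : ℕ∞) ≤ W₀.length).trans hW0len.le)
        (edist_le W')
    have e2 : W'.length = W₀.length := Nat.cast_inj.mp (e1.trans hW0len.symm)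
    have hsnd : ∀ v ∈ W₀.support, v.2 = x := heq e2
    have hsupA : ∀ u ∈ W'.support, u ∈ A := by
      intro u hu
      obtain ⟨v, hv, hv1⟩ := hsup u hu
      have hvS : v ∈ S := by
        rw [hW₀, Walk.support_map] at hv
        obtain ⟨w, hw, hw1⟩ := List.mem_map.mp hv
        exact hw1 ▸ w.2
      have : (u, x) ∈ S := by
        have := hsnd v hv
        rwa [← hv1, ← this, Prod.mk.eta]
      exact (key u).mpr this
    have upper : (G.induce A).edist a b ≤ G.edist a.1 b.1 := by
      have := aux_lift_walk G A W' hsupA a.2 b.2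
      rw [e1] at this
      simpa using this
    exact le_antisymm upper (aux_edist_le_induce G A a b)
end

section
/- If u_1,...,u_n is an sdp sequence for G and v_1,...,v_m is an sdp sequence for H, then the ordering (u_1,v_1),...,(u_n,v_1),(u_1,v_2),...,(u_n,v_2),...,(u_1,v_m),...,(u_n,v_m) is an sdp sequence for G □ H. -/
open SimpleGraph

variable {α β : Type*}

lemma edist_hom_le {V W : Type*} {G : SimpleGraph V} {G' : SimpleGraph W} (f : G →g G')
    (a b : V) : G'.edist (f a) (f b) ≤ G.edist a b := by
  rcases eq_or_ne (G.edist a b) ⊤ with h | h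
  · exact h ▸ le_top
  · obtain ⟨p, hp⟩ := SimpleGraph.exists_walk_of_edist_ne_top h
    calc G'.edist (f a) (f b) ≤ (p.map f).length := SimpleGraph.edist_le _
    _ = p.length := by simp
    _ = G.edist a b := by exact_mod_cast hp

lemma boxProd_walk_le {G : SimpleGraph α} {H : SimpleGraph β} {x y : α × β}
    (p : (G □ H).Walk x y) :
    G.edist x.1 y.1 + H.edist x.2 y.2 ≤ p.length := by
  induction p with
  | nil => simp [SimpleGraph.edist_self]
  | @cons x z y h p ih =>
    rw [SimpleGraph.Walk.length_cons]
    rcases SimpleGraph.boxProd_adj.mp h with ⟨hadj, he⟩ | ⟨hadj, he⟩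
    · calc G.edist x.1 y.1 + H.edist x.2 y.2
          ≤ (G.edist x.1 z.1 + G.edist z.1 y.1) + H.edist z.2 y.2 := by
            rw [he]; exact add_le_add_left SimpleGraph.edist_triangle _
        _ ≤ (1 + G.edist z.1 y.1) + H.edist z.2 y.2 := by
            gcongr; exact (SimpleGraph.edist_eq_one_iff_adj.mpr hadj).le
        _ = 1 + (G.edist z.1 y.1 + H.edist z.2 y.2) := by ring
        _ ≤ 1 + (p.length : ℕ∞) := by gcongr
        _ = ((p.length + 1 : ℕ) : ℕ∞) := by push_cast; ring
    · calc G.edist x.1 y.1 + H.edist x.2 y.2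
          ≤ G.edist z.1 y.1 + (H.edist x.2 z.2 + H.edist z.2 y.2) := by
            rw [he]; exact add_le_add_right SimpleGraph.edist_triangle _
        _ ≤ G.edist z.1 y.1 + (1 + H.edist z.2 y.2) := by
            gcongr; exact (SimpleGraph.edist_eq_one_iff_adj.mpr hadj).le
        _ = 1 + (G.edist z.1 y.1 + H.edist z.2 y.2) := by ring
        _ ≤ 1 + (p.length : ℕ∞) := by gcongr
        _ = ((p.length + 1 : ℕ) : ℕ∞) := by push_cast; ring

theorem stmt_12 (G : SimpleGraph α) (H : SimpleGraph β)
    [Fintype α] [Fintype β] (hG : G.Connected) (hH : H.Connected)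
    (lG : List α) (lH : List β)
    (hlG : IsSdpList G lG) (hlH : IsSdpList H lH) :
    IsSdpList (G □ H) (lH.flatMap fun v => lG.map fun u => (u, v)) := by
  obtain ⟨hGnd, hGmem, hGiso⟩ := hlG
  obtain ⟨hHnd, hHmem, hHiso⟩ := hlH
  set L : List (α × β) := lH.flatMap fun v => lG.map fun u => (u, v) with hL
  refine ⟨?_, ?_, ?_⟩
  · -- Nodup
    refine List.nodup_flatMap.mpr ⟨fun v _ => hGnd.map fun u u' h => ?_, ?_⟩
    · exact (Prod.mk.injEq _ _ _ _ ▸ h : _ ∧ _).1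
    · refine hHnd.imp fun {v v'} hne => ?_
      intro p hp hp'
      simp only [List.mem_map] at hp hp'
      obtain ⟨u, _, rfl⟩ := hp
      obtain ⟨u', _, h⟩ := hp'
      exact hne ((Prod.mk.injEq _ _ _ _ ▸ h : _ ∧ _).2.symm ▸ rfl)
  · -- mem
    rintro ⟨u, v⟩
    simp only [hL, List.mem_flatMap, List.mem_map]
    exact ⟨v, hHmem v, u, hGmem u, rfl⟩
  · -- isometric
    intro s
    rcases eq_or_ne lG [] with hnil | hnil
    · have hE : IsEmpty α := ⟨fun u => by simpa [hnil] using hGmem u⟩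
      intro a b
      exact (hE.false a.1.1).elim
    have hn : 0 < lG.length := List.length_pos_iff.mpr hnil
    have hflen : ∀ l : List β,
        (l.flatMap fun v => lG.map fun u => (u, v)).length = l.length * lG.length := by
      intro l
      induction l with
      | nil => simp
      | cons v t ih => simp [ih, Nat.succ_mul]; ring
    have hlen : L.length = lH.length * lG.length := hflen lH
    by_cases hs : L.length ≤ s
    · intro a b
      exfalso
      obtain ⟨⟨u, v⟩, ha⟩ := a
      apply ha
      rw [List.take_of_length_le hs]
      simp only [hL, List.mem_flatMap, List.mem_map]
      exact ⟨v, hHmem v, u, hGmem u, rfl⟩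
    push_neg at hs
    set n := lG.length
    set q := s / n with hqdef
    set r := s % n with hrdef
    have hq : q < lH.length := by
      rw [hqdef]
      rw [Nat.div_lt_iff_lt_mul hn]
      rw [hlen] at hs
      omega
    have hr : r < n := Nat.mod_lt _ hn
    set vs := lH.get ⟨q, hq⟩ with hvs
    -- key list identity
    have htake : L.take s = ((lH.take q).flatMap fun v => lG.map fun u => (u, v))
        ++ (lG.take r).map (fun u => (u, vs)) := by
      have hlen1 : ((lH.take q).flatMap fun v => lG.map fun u => (u, v)).length = q * n := by
        rw [hflen, List.length_take, Nat.min_eq_left hq.le]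
      have hsplit : lH = lH.take q ++ (vs :: lH.drop (q + 1)) := by
        conv_lhs => rw [← List.take_append_drop q lH]
        rw [List.drop_eq_getElem_cons hq]
        rfl
      have hseq : s = q * n + r := by
        rw [hqdef, hrdef, Nat.mul_comm]
        exact (Nat.div_add_mod s n).symm
      conv_lhs => rw [hL, hsplit]
      rw [List.flatMap_append]
      rw [hseq, ← hlen1, List.take_length_add_append]
      congr 1
      rw [List.flatMap_cons]
      rw [List.take_append_of_le_length (by simpa using hr.le)]
      rw [List.map_take]
    have hmem : ∀ p : α × β, p ∈ L.take s ↔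
        p.2 ∈ lH.take q ∨ (p.2 = vs ∧ p.1 ∈ lG.take r) := by
      rintro ⟨u, v⟩
      rw [htake]
      simp only [List.mem_append, List.mem_flatMap, List.mem_map, Prod.mk.injEq]
      constructor
      · rintro (⟨v', hv', u', _, rfl, rfl⟩ | ⟨u', hu', rfl, rfl⟩)
        · exact Or.inl hv'
        · exact Or.inr ⟨rfl, hu'⟩
      · rintro (hv | ⟨rfl, hu⟩)
        · exact Or.inl ⟨v, hv, u, hGmem u, rfl, rfl⟩
        · exact Or.inr ⟨u, hu, rfl, rfl⟩
    have hSmem : ∀ p : α × β, p ∉ L.take s ↔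
        (p.2 ∉ lH.take q ∧ (p.2 = vs → p.1 ∉ lG.take r)) := by
      intro p
      rw [hmem p]
      tauto
    have hvsnot : vs ∉ lH.take q := by
      intro hc
      have h1 : lH.take (q + 1) = lH.take q ++ [vs] := by
        rw [List.take_succ, List.getElem?_eq_getElem hq]
        rfl
      have h2 : (lH.take (q + 1)).Nodup := hHnd.sublist (List.take_sublist _ _)
      rw [h1, List.nodup_append] at h2
      exact h2.2.2 vs hc vs (by simp) rfl
    have htq1 : ∀ v : β, v ∉ lH.take (q + 1) ↔ (v ∉ lH.take q ∧ v ≠ vs) := by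
      intro v
      have h1 : lH.take (q + 1) = lH.take q ++ [vs] := by
        rw [List.take_succ, List.getElem?_eq_getElem hq]
        rfl
      rw [h1]
      simp only [List.mem_append, List.mem_singleton]
      tauto
    set S : Set (α × β) := {v : α × β | v ∉ L.take s} with hSdef
    show ∀ a b : S, ((G □ H).induce S).edist a b = (G □ H).edist a.1 b.1
    -- key upper bound when a.1.2 ≠ vs
    have key : ∀ a b : S, a.1.2 ≠ vs →
        ((G □ H).induce S).edist a b ≤ G.edist a.1.1 b.1.1 + H.edist a.1.2 b.1.2 := by
      rintro ⟨⟨a1, a2⟩, ha⟩ ⟨⟨b1, b2⟩, hb⟩ hne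
      simp only at hne
      have ha' := (hSmem _).mp ha
      have hb' := (hSmem _).mp hb
      simp only at ha' hb'
      have hc : ((b1, a2) : α × β) ∈ S := (hSmem _).mpr ⟨ha'.1, fun h => absurd h hne⟩
      have step1 : ((G □ H).induce S).edist ⟨(a1, a2), ha⟩ ⟨(b1, a2), hc⟩ ≤ G.edist a1 b1 := by
        let f : G →g (G □ H).induce S :=
          ⟨fun u => ⟨(u, a2), (hSmem _).mpr ⟨ha'.1, fun h => absurd h hne⟩⟩,
           fun h => Or.inl ⟨h, rfl⟩⟩
        exact edist_hom_le f a1 b1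
      have step2 : ((G □ H).induce S).edist ⟨(b1, a2), hc⟩ ⟨(b1, b2), hb⟩ ≤ H.edist a2 b2 := by
        by_cases hb1 : b1 ∈ lG.take r
        · have hb2ne : b2 ≠ vs := fun h => hb'.2 h hb1
          let T : Set β := {v : β | v ∉ lH.take (q + 1)}
          let g : H.induce T →g (G □ H).induce S :=
            ⟨fun v => ⟨(b1, v.1), (hSmem _).mpr
              ⟨((htq1 v.1).mp v.2).1, fun h => absurd h ((htq1 v.1).mp v.2).2⟩⟩,
             fun h => Or.inr ⟨h, rfl⟩⟩
          have haT : a2 ∈ T := (htq1 a2).mpr ⟨ha'.1, hne⟩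
          have hbT : b2 ∈ T := (htq1 b2).mpr ⟨hb'.1, hb2ne⟩
          calc ((G □ H).induce S).edist ⟨(b1, a2), hc⟩ ⟨(b1, b2), hb⟩
              = ((G □ H).induce S).edist (g ⟨a2, haT⟩) (g ⟨b2, hbT⟩) := rfl
            _ ≤ (H.induce T).edist ⟨a2, haT⟩ ⟨b2, hbT⟩ := edist_hom_le g _ _
            _ = H.edist a2 b2 := hHiso (q + 1) ⟨a2, haT⟩ ⟨b2, hbT⟩
        · let T : Set β := {v : β | v ∉ lH.take q}
          let g : H.induce T →g (G □ H).induce S :=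
            ⟨fun v => ⟨(b1, v.1), (hSmem _).mpr ⟨v.2, fun _ => hb1⟩⟩,
             fun h => Or.inr ⟨h, rfl⟩⟩
          have haT : a2 ∈ T := ha'.1
          have hbT : b2 ∈ T := hb'.1
          calc ((G □ H).induce S).edist ⟨(b1, a2), hc⟩ ⟨(b1, b2), hb⟩
              = ((G □ H).induce S).edist (g ⟨a2, haT⟩) (g ⟨b2, hbT⟩) := rfl
            _ ≤ (H.induce T).edist ⟨a2, haT⟩ ⟨b2, hbT⟩ := edist_hom_le g _ _
            _ = H.edist a2 b2 := hHiso q ⟨a2, haT⟩ ⟨b2, hbT⟩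
      calc ((G □ H).induce S).edist ⟨(a1, a2), ha⟩ ⟨(b1, b2), hb⟩
          ≤ ((G □ H).induce S).edist ⟨(a1, a2), ha⟩ ⟨(b1, a2), hc⟩
            + ((G □ H).induce S).edist ⟨(b1, a2), hc⟩ ⟨(b1, b2), hb⟩ :=
            SimpleGraph.edist_triangle
        _ ≤ G.edist a1 b1 + H.edist a2 b2 := add_le_add step1 step2
    intro a b
    have upper : ((G □ H).induce S).edist a b ≤ G.edist a.1.1 b.1.1 + H.edist a.1.2 b.1.2 := by
      by_cases h1 : a.1.2 = vs
      · by_cases h2 : b.1.2 = vs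
        · -- both at level vs
          obtain ⟨⟨a1, a2⟩, ha⟩ := a
          obtain ⟨⟨b1, b2⟩, hb⟩ := b
          simp only at h1 h2
          subst h1; subst h2
          have ha' := (hSmem _).mp ha
          have hb' := (hSmem _).mp hb
          have har : a1 ∉ lG.take r := ha'.2 rfl
          have hbr : b1 ∉ lG.take r := hb'.2 rfl
          let T : Set α := {u : α | u ∉ lG.take r}
          let f : G.induce T →g (G □ H).induce S :=
            ⟨fun u => ⟨(u.1, vs), (hSmem _).mpr ⟨hvsnot, fun _ => u.2⟩⟩,
             fun h => Or.inl ⟨h, rfl⟩⟩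
          calc ((G □ H).induce S).edist ⟨(a1, vs), ha⟩ ⟨(b1, vs), hb⟩
              = ((G □ H).induce S).edist (f ⟨a1, har⟩) (f ⟨b1, hbr⟩) := rfl
            _ ≤ (G.induce T).edist ⟨a1, har⟩ ⟨b1, hbr⟩ := edist_hom_le f _ _
            _ = G.edist a1 b1 := hGiso r ⟨a1, har⟩ ⟨b1, hbr⟩
            _ = G.edist a1 b1 + H.edist vs vs := by rw [SimpleGraph.edist_self, add_zero]
        · calc ((G □ H).induce S).edist a b
              = ((G □ H).induce S).edist b a := SimpleGraph.edist_comm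
            _ ≤ G.edist b.1.1 a.1.1 + H.edist b.1.2 a.1.2 := key b a h2
            _ = G.edist a.1.1 b.1.1 + H.edist a.1.2 b.1.2 := by
                rw [SimpleGraph.edist_comm, SimpleGraph.edist_comm (u := b.1.2)]
      · exact key a b h1
    have lower1 : (G □ H).edist a.1 b.1 ≤ ((G □ H).induce S).edist a b := by
      let f : (G □ H).induce S →g G □ H := ⟨Subtype.val, fun h => h⟩
      exact edist_hom_le f a b
    have lower2 : G.edist a.1.1 b.1.1 + H.edist a.1.2 b.1.2 ≤ (G □ H).edist a.1 b.1 := by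
      rcases eq_or_ne ((G □ H).edist a.1 b.1) ⊤ with h | h
      · exact h ▸ le_top
      · obtain ⟨p, hp⟩ := SimpleGraph.exists_walk_of_edist_ne_top h
        rw [← hp]
        exact boxProd_walk_le p
    exact le_antisymm (upper.trans lower2) lower1
end

section
/- Every distance-hereditary graph is sequentially distance preserving. -/
open SimpleGraph

variable {α β : Type*}

private lemma reach_induce_aux (G : SimpleGraph α) (S : Set α) :
    ∀ {a b : α} (p : G.Walk a b), (∀ x ∈ p.support, x ∈ S) →
    ∀ (ha : a ∈ S) (hb : b ∈ S), (G.induce S).Reachable ⟨a, ha⟩ ⟨b, hb⟩ := by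
  intro a b p
  induction p with
  | nil => intro _ _ _; exact Reachable.refl _
  | @cons u v w h q ih =>
    intro hp ha hb
    have hv : v ∈ S := hp v (by simp)
    have hadj : (G.induce S).Adj ⟨u, ha⟩ ⟨v, hv⟩ := h
    exact hadj.reachable.trans (ih (fun x hx => hp x (by simp [hx])) hv hb)

private lemma exists_removable {β : Type*} [Fintype β] [DecidableEq β] (H : SimpleGraph β)
    (hH : H.Connected) (h2 : 1 < Fintype.card β) :
    ∃ v : β, (H.induce {w | w ≠ v}).Connected := by
  obtain ⟨r⟩ := hH.nonempty
  obtain ⟨v, -, hmax⟩ := Finset.exists_max_image Finset.univ (H.dist r)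
    ⟨r, Finset.mem_univ r⟩
  replace hmax := fun w => hmax w (Finset.mem_univ w)
  have hrv : r ≠ v := by
    obtain ⟨w, hw⟩ := Fintype.exists_ne_of_one_lt_card h2 r
    have h1 : 0 < H.dist r w := hH.pos_dist_of_ne (Ne.symm hw)
    have h3 : 0 < H.dist r v := lt_of_lt_of_le h1 (hmax w)
    intro h; rw [h, SimpleGraph.dist_self] at h3; exact lt_irrefl _ h3
  have key : ∀ w : β, w ≠ v → ∃ p : H.Walk w r, ∀ x ∈ p.support, x ≠ v := by
    intro w hw
    obtain ⟨p, hp⟩ := hH.exists_walk_length_eq_dist w r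
    refine ⟨p, fun x hx => ?_⟩
    intro hxv
    replace hx : v ∈ p.support := hxv ▸ hx
    have h1 := SimpleGraph.dist_le (p.takeUntil v hx)
    have h2' := SimpleGraph.dist_le (p.dropUntil v hx)
    have hlen : (p.takeUntil v hx).length + (p.dropUntil v hx).length = p.length := by
      have := congrArg Walk.length (p.take_spec hx)
      rwa [Walk.length_append] at this
    have hwv : 0 < H.dist w v := hH.pos_dist_of_ne hw
    have hcm1 : H.dist w r = H.dist r w := SimpleGraph.dist_comm
    have hcm2 : H.dist v r = H.dist r v := SimpleGraph.dist_comm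
    have hc := hmax w
    omega
  refine ⟨v, ?_⟩
  rw [SimpleGraph.connected_iff]
  refine ⟨fun a b => ?_, ⟨⟨r, hrv⟩⟩⟩
  obtain ⟨pa, hpa⟩ := key a.1 a.2
  obtain ⟨pb, hpb⟩ := key b.1 b.2
  have ra := reach_induce_aux H {w | w ≠ v} pa hpa a.2 hrv
  have rb := reach_induce_aux H {w | w ≠ v} pb hpb b.2 hrv
  exact ra.trans rb.symm

private def induceInduceEquiv (S : Set α) (T : Set ↥S) :
    ↥T ≃ ↥{x | ∃ hx : x ∈ S, (⟨x, hx⟩ : ↥S) ∈ T} where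
  toFun a := ⟨a.1.1, a.1.2, a.2⟩
  invFun b := ⟨⟨b.1, b.2.choose⟩, b.2.choose_spec⟩
  left_inv a := Subtype.ext (Subtype.ext rfl)
  right_inv b := Subtype.ext rfl

private def induceInduceIso (G : SimpleGraph α) (S : Set α) (T : Set ↥S) :
    (G.induce S).induce T ≃g G.induce {x | ∃ hx : x ∈ S, (⟨x, hx⟩ : ↥S) ∈ T} where
  toEquiv := induceInduceEquiv S T
  map_rel_iff' := Iff.rfl

private lemma good_list (G : SimpleGraph α) [DecidableEq α] :
    ∀ (S : Finset α), (S.Nonempty → (G.induce ↑S).Connected) →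
    ∃ l : List α, l.Nodup ∧ (∀ v, v ∈ l ↔ v ∈ S) ∧
      ∀ s : ℕ, l.drop s = [] ∨ (G.induce {v | v ∈ l.drop s}).Connected := by
  intro S
  induction S using Finset.strongInduction with
  | _ S ih =>
    intro hconn
    rcases S.eq_empty_or_nonempty with rfl | hne
    · exact ⟨[], by simp, by simp, fun s => Or.inl (by simp)⟩
    have hc := hconn hne
    rcases eq_or_lt_of_le (show 1 ≤ S.card from hne.card_pos) with h1 | h1
    · obtain ⟨a, rfl⟩ := Finset.card_eq_one.mp h1.symm
      refine ⟨[a], by simp, by simp, fun s => ?_⟩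
      cases s with
      | zero =>
        right
        have hset : {x : α | x ∈ [a].drop 0} = ({a} : Set α) := by ext x; simp
        rw [hset, SimpleGraph.connected_iff]
        refine ⟨fun u w => ?_, ⟨⟨a, rfl⟩⟩⟩
        have : u = w := Subsingleton.elim u w
        exact this ▸ Reachable.refl u
      | succ s => exact Or.inl (by simp)
    · have hcard : 1 < Fintype.card ↥(↑S : Set α) := by
        have heq : Fintype.card ↥(↑S : Set α) = S.card := Fintype.card_coe S
        omega
      obtain ⟨v, hv⟩ := exists_removable (G.induce (↑S : Set α)) hc hcard
      have hvS : v.1 ∈ S := v.2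
      have hS'conn : (G.induce ↑(S.erase v.1)).Connected := by
        have hiso := induceInduceIso G (↑S : Set α) {w | w ≠ v}
        have := (SimpleGraph.Iso.connected_iff hiso).mp hv
        have hset : {x : α | ∃ hx : x ∈ (↑S : Set α), (⟨x, hx⟩ : ↥(↑S : Set α)) ∈ {w | w ≠ v}}
            = ↑(S.erase v.1) := by
          ext x
          simp only [Set.mem_setOf_eq, Finset.coe_erase, Set.mem_diff, Finset.mem_coe,
            Set.mem_singleton_iff]
          constructor
          · rintro ⟨hx, hne'⟩
            refine ⟨hx, fun h => hne' (Subtype.ext h)⟩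
          · rintro ⟨hx, hne'⟩
            exact ⟨hx, fun h => hne' (congrArg Subtype.val h)⟩
        rwa [hset] at this
      obtain ⟨l', hnd, hmem, hgood⟩ :=
        ih (S.erase v.1) (Finset.erase_ssubset hvS) (fun _ => hS'conn)
      refine ⟨v.1 :: l', ?_, ?_, ?_⟩
      · refine List.nodup_cons.mpr ⟨fun h => ?_, hnd⟩
        exact Finset.notMem_erase _ _ ((hmem _).mp h)
      · intro w
        simp only [List.mem_cons, hmem, Finset.mem_erase]
        constructor
        · rintro (rfl | ⟨-, h⟩)
          · exact hvS
          · exact h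
        · intro h
          by_cases hw : w = v.1
          · exact Or.inl hw
          · exact Or.inr ⟨hw, h⟩
      · intro s
        cases s with
        | zero =>
          right
          have hset : {x : α | x ∈ (v.1 :: l').drop 0} = (↑S : Set α) := by
            ext x
            simp only [List.drop_zero, Set.mem_setOf_eq, List.mem_cons, hmem,
              Finset.mem_erase, Finset.mem_coe]
            constructor
            · rintro (rfl | ⟨-, h⟩)
              · exact hvS
              · exact h
            · intro h
              by_cases hw : x = v.1
              · exact Or.inl hw
              · exact Or.inr ⟨hw, h⟩
          rw [hset]
          exact hc
        | succ s => exact hgood s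

theorem stmt_14' (G : SimpleGraph α) [Fintype α] (hG : G.Connected)
    (hDH : ∀ S : Set α, (G.induce S).Connected →
      ∀ a b : S, (G.induce S).edist a b = G.edist a.1 b.1) :
    G.Connected ∧ ∃ l : List α, l.Nodup ∧ (∀ v : α, v ∈ l) ∧
      ∀ s : ℕ, ∀ a b : {v : α | v ∉ l.take s},
        (G.induce {v : α | v ∉ l.take s}).edist a b = G.edist a.1 b.1 := by
  classical
  refine ⟨hG, ?_⟩
  have huniv : (G.induce ↑(Finset.univ : Finset α)).Connected := by
    have hset : ((↑(Finset.univ : Finset α)) : Set α) = Set.univ := Finset.coe_univ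
    rw [hset]
    exact (SimpleGraph.Iso.connected_iff (induceUnivIso G)).mpr hG
  obtain ⟨l, hnd, hmem, hgood⟩ := good_list G Finset.univ (fun _ => huniv)
  refine ⟨l, hnd, fun v => (hmem v).mpr (Finset.mem_univ v), fun s => ?_⟩
  have hd : List.Disjoint (l.take s) (l.drop s) := by
    have h2 := hnd
    rw [← List.take_append_drop s l, List.nodup_append] at h2
    intro a ha hb
    exact h2.2.2 a ha a hb rfl
  have hcompl : {v : α | v ∉ l.take s} = {v | v ∈ l.drop s} := by
    ext x
    simp only [Set.mem_setOf_eq]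
    have hx : x ∈ l.take s ∨ x ∈ l.drop s := by
      have hxl : x ∈ l := (hmem x).mpr (Finset.mem_univ x)
      rw [← List.take_append_drop s l] at hxl
      exact List.mem_append.mp hxl
    constructor
    · intro h; tauto
    · intro h h'; exact hd h' h
  rw [hcompl]
  rcases hgood s with h | h
  · intro a b
    exact absurd a.2 (by simp [h])
  · exact hDH _ h

theorem stmt_14 (G : SimpleGraph α) [Fintype α] (hG : G.Connected)
    (hDH : ∀ S : Set α, (G.induce S).Connected → IsometricSet G S) :
    IsSDP G := by
  exact stmt_14' G hG hDH
end
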